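/- arXiv:1410.2941 — 2 statements merged into one kernel-verified Lean document; each statement's English description precedes it below -/
import Mathlib

section
/- In any graph G (simple, connected, locally finite, with edges of arbitrary lengths), the hyperbolicity constant satisfies δ(G) = sup{δ(T) : T is a geodesic triangle in G that is a cycle}. -/
open Metric
open scoped ENNReal

noncomputable section

/-- A geodesic arc from `x` to `y` in a metric space `X`: the image of an isometric
embedding of the interval `[0, dist x y]` sending `0` to `x` and `dist x y` to `y`. -/
def IsGeodesicArc {X : Type} [MetricSpace X] (x y : X) (s : Set X) : Prop :=
  ∃ γ : ℝ → X, γ 0 = x ∧ γ (dist x y) = y ∧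
    (∀ a ∈ Set.Icc (0 : ℝ) (dist x y), ∀ b ∈ Set.Icc (0 : ℝ) (dist x y),
      dist (γ a) (γ b) = |a - b|) ∧
    s = γ '' Set.Icc (0 : ℝ) (dist x y)

/-- A geodesic triangle with vertices `x, y, z` and sides `s₁ = [xy]`, `s₂ = [yz]`,
`s₃ = [zx]`. -/
def IsGeodTriangle {X : Type} [MetricSpace X] (x y z : X) (s₁ s₂ s₃ : Set X) : Prop :=
  IsGeodesicArc x y s₁ ∧ IsGeodesicArc y z s₂ ∧ IsGeodesicArc z x s₃

/-- The sharp constant for thinness of the side `s` with respect to the set `t`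
(the union of the other sides): the supremum over points of `s` of the distance to `t`. -/
def sideThin {X : Type} [MetricSpace X] (s t : Set X) : ℝ≥0∞ :=
  ⨆ p ∈ s, ENNReal.ofReal (infDist p t)

/-- The sharp thin constant `δ(T)` of a triangle (or trilateral) with sides
`s₁ s₂ s₃`: a triangle is `δ`-thin iff `triThin s₁ s₂ s₃ ≤ δ`. -/
def triThin {X : Type} [MetricSpace X] (s₁ s₂ s₃ : Set X) : ℝ≥0∞ :=
  max (sideThin s₁ (s₂ ∪ s₃)) (max (sideThin s₂ (s₃ ∪ s₁)) (sideThin s₃ (s₁ ∪ s₂)))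

/-- The hyperbolicity constant `δ(X)` of a metric space:
`δ(X) = sup { δ(T) : T is a geodesic triangle in X }` (with value in `[0,∞]`). -/
def hypConst (X : Type) [MetricSpace X] : ℝ≥0∞ :=
  ⨆ (x : X) (y : X) (z : X) (s₁ : Set X) (s₂ : Set X) (s₃ : Set X)
    (_ : IsGeodTriangle x y z s₁ s₂ s₃), triThin s₁ s₂ s₃

/-- A simple closed curve in a metric space: an injective continuous image of a circle. -/
def IsSimpleClosedCurve {X : Type} [MetricSpace X] (s : Set X) : Prop :=
  ∃ f : AddCircle (1 : ℝ) → X, Continuous f ∧ Function.Injective f ∧ Set.range f = s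

/-- A simple, connected, locally finite graph with edges of arbitrary (positive) lengths,
regarded as a geodesic metric space `X`: each edge `[u,v]` of length `ℓ s(u,v)` is
identified with the real interval `[0, ℓ s(u,v)]` via the parametrization `param u v`,
and the distance is the shortest-path distance. -/
structure MetricGraph where
  /-- the vertices -/
  V : Type
  /-- the (simple) graph structure -/
  G : SimpleGraph V
  conn : G.Connected
  locFin : ∀ v : V, (G.neighborSet v).Finite
  /-- the length of each edge -/
  ℓ : Sym2 V → ℝ
  ℓ_pos : ∀ e ∈ G.edgeSet, 0 < ℓ e
  /-- the set of points of the graph, as a metric space -/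
  X : Type
  [mX : MetricSpace X]
  /-- the inclusion of the vertices among the points -/
  ι : V → X
  ι_inj : Function.Injective ι
  /-- the arclength parametrization of each edge by `[0, ℓ s(u,v)]` -/
  param : ∀ u v : V, G.Adj u v → ℝ → X
  param_zero : ∀ (u v : V) (h : G.Adj u v), param u v h 0 = ι u
  param_symm : ∀ (u v : V) (h : G.Adj u v) (t : ℝ),
    param v u h.symm t = param u v h (ℓ s(u, v) - t)
  param_injOn : ∀ (u v : V) (h : G.Adj u v),
    Set.InjOn (param u v h) (Set.Icc 0 (ℓ s(u, v)))
  /-- every point of the graph lies on some edge -/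
  cover : ∀ x : X, ∃ (u v : V) (h : G.Adj u v),
    ∃ t ∈ Set.Icc (0 : ℝ) (ℓ s(u, v)), x = param u v h t
  /-- the distance between vertices is the shortest-path distance -/
  dist_vertex : ∀ u v : V,
    dist (ι u) (ι v) = sInf { L : ℝ | ∃ w : G.Walk u v, L = (w.edges.map ℓ).sum }
  /-- the distance from an interior point of an edge to any other point is realized
  either within the edge or through one of the two endpoints of the edge -/
  dist_eq : ∀ (u v : V) (h : G.Adj u v), ∀ t ∈ Set.Icc (0 : ℝ) (ℓ s(u, v)), ∀ y : X,
    dist (param u v h t) y =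
      sInf ({ t + dist (ι u) y, (ℓ s(u, v) - t) + dist (ι v) y } ∪
            { d : ℝ | ∃ r ∈ Set.Icc (0 : ℝ) (ℓ s(u, v)), y = param u v h r ∧ d = |t - r| })
  /-- the space of points is a geodesic metric space -/
  geodesic : ∀ x y : X, ∃ s : Set X, IsGeodesicArc x y s

attribute [instance] MetricGraph.mX

namespace MetricGraph

variable (M : MetricGraph)

/-- The set of points of an edge of the graph. -/
def edgePoints {u v : M.V} (h : M.G.Adj u v) : Set M.X :=
  M.param u v h '' Set.Icc 0 (M.ℓ s(u, v))

/-- The midpoint `Pm(e)` of an edge. -/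
def midpt {u v : M.V} (h : M.G.Adj u v) : M.X :=
  M.param u v h (M.ℓ s(u, v) / 2)

/-- `PMV(G)`: the set of points which are vertices or midpoints of edges. -/
def PMV : Set M.X :=
  Set.range M.ι ∪ { x | ∃ (u v : M.V) (h : M.G.Adj u v), x = M.midpt h }

/-- `l_max = sup_{e ∈ E(G)} L(e)` (with value in `[0,∞]`). -/
def lmax : ℝ≥0∞ :=
  ⨆ e : M.G.edgeSet, ENNReal.ofReal (M.ℓ e.1)

/-- A cycle graph: a (finite) connected graph in which every vertex has degree 2.
(Connectedness is part of the `MetricGraph` structure.) -/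
def IsCycleGraph : Prop :=
  Finite M.V ∧ ∀ v : M.V, (M.G.neighborSet v).ncard = 2

end MetricGraph

/-- The line graph `L(G)` of a metric graph `G`: its vertices correspond to the edges
of `G`, two of them being adjacent when the corresponding edges of `G` share a vertex;
the edge `[V_{e_i}, V_{e_j}]` of `L(G)` has length `(L(e_i) + L(e_j))/2`. -/
structure LineGraphOf (M : MetricGraph) where
  /-- the line graph, as a metric graph -/
  L : MetricGraph
  /-- the vertices of `L(G)` correspond to the edges of `G` -/
  vEquiv : L.V ≃ M.G.edgeSet
  adj_iff : ∀ a b : L.V, L.G.Adj a b ↔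
    (a ≠ b ∧ ∃ v : M.V, v ∈ (vEquiv a : Sym2 M.V) ∧ v ∈ (vEquiv b : Sym2 M.V))
  len_eq : ∀ a b : L.V, L.G.Adj a b →
    L.ℓ s(a, b) = (M.ℓ (vEquiv a : Sym2 M.V) + M.ℓ (vEquiv b : Sym2 M.V)) / 2

/-- The set `PM_LV(L(G))`: points of `L(G)` which are vertices or points
`Pm_L([V_{e_i},V_{e_j}])`, i.e. the point of the edge `[V_{e_i},V_{e_j}]` at distance
`L(e_i)/2` from `V_{e_i}`. -/
def lineGraphPMLV (M : MetricGraph) (LG : LineGraphOf M) : Set LG.L.X :=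
  Set.range LG.L.ι ∪
    { x | ∃ (a b : LG.L.V) (hab : LG.L.G.Adj a b),
        x = LG.L.param a b hab (M.ℓ (LG.vEquiv a : Sym2 M.V) / 2) }

/-- The canonical map `h : L(G) → G`.  It sends the vertex `V_e` to the midpoint `Pm(e)`
of `e`, the point `Pm_L([V_{e_i},V_{e_j}])` to the common vertex `e_i ∩ e_j`, and maps
each half-edge of `L(G)` isometrically onto the corresponding half-edge of `G`:
if `e_a = s(u,w)` and `w` is the common vertex of `e_a` and `e_b`, then the point of the
edge `[V_{e_a},V_{e_b}]` at distance `t ∈ [0, L(e_a)/2]` from `V_{e_a}` is sent to the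
point of `e_a` at distance `L(e_a)/2 + t` from `u`. -/
structure CanonicalMap (M : MetricGraph) (LG : LineGraphOf M) where
  /-- the underlying map on points -/
  h : LG.L.X → M.X
  h_halfEdge : ∀ (a b : LG.L.V) (hab : LG.L.G.Adj a b) (u w : M.V) (huw : M.G.Adj u w),
    (LG.vEquiv a : Sym2 M.V) = s(u, w) → w ∈ (LG.vEquiv b : Sym2 M.V) →
    ∀ t ∈ Set.Icc (0 : ℝ) (M.ℓ (LG.vEquiv a : Sym2 M.V) / 2),
      h (LG.L.param a b hab t) =
        M.param u w huw (M.ℓ (LG.vEquiv a : Sym2 M.V) / 2 + t)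

end

noncomputable section

namespace HypAux

open Set

variable {X : Type} [MetricSpace X]

/-- Parametrization property of a geodesic arc. -/
def GP (x y : X) (γ : ℝ → X) : Prop :=
  γ 0 = x ∧ γ (dist x y) = y ∧
    ∀ a ∈ Set.Icc (0 : ℝ) (dist x y), ∀ b ∈ Set.Icc (0 : ℝ) (dist x y),
      dist (γ a) (γ b) = |a - b|

theorem isGeodesicArc_iff {x y : X} {s : Set X} :
    IsGeodesicArc x y s ↔ ∃ γ, GP x y γ ∧ s = γ '' Set.Icc 0 (dist x y) := by
  constructor
  · rintro ⟨γ, h1, h2, h3, h4⟩; exact ⟨γ, ⟨h1, h2, h3⟩, h4⟩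
  · rintro ⟨γ, ⟨h1, h2, h3⟩, h4⟩; exact ⟨γ, h1, h2, h3, h4⟩

namespace GP

variable {x y : X} {γ : ℝ → X}

theorem injOn (h : GP x y γ) : Set.InjOn γ (Set.Icc 0 (dist x y)) := by
  intro a ha b hb hab
  have h2 := h.2.2 a ha b hb
  rw [hab, dist_self] at h2
  have h3 := abs_eq_zero.mp h2.symm
  linarith [sub_eq_zero.mp h3]

theorem continuousOn (h : GP x y γ) : ContinuousOn γ (Set.Icc 0 (dist x y)) := by
  have : LipschitzOnWith 1 γ (Set.Icc 0 (dist x y)) := by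
    apply LipschitzOnWith.of_dist_le_mul
    intro a ha b hb
    rw [h.2.2 a ha b hb]
    simp [Real.dist_eq]
  exact this.continuousOn

theorem dist_sub (h : GP x y γ) {a b : ℝ} (ha : a ∈ Set.Icc 0 (dist x y))
    (hb : b ∈ Set.Icc 0 (dist x y)) (hab : a ≤ b) : dist (γ a) (γ b) = b - a := by
  rw [h.2.2 a ha b hb, abs_sub_comm, abs_of_nonneg (by linarith)]

theorem subarc (h : GP x y γ) {a b : ℝ} (ha : a ∈ Set.Icc 0 (dist x y))
    (hb : b ∈ Set.Icc 0 (dist x y)) (hab : a ≤ b) :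
    IsGeodesicArc (γ a) (γ b) (γ '' Set.Icc a b) := by
  have hd : dist (γ a) (γ b) = b - a := h.dist_sub ha hb hab
  refine ⟨fun t => γ (a + t), by simp, ?_, ?_, ?_⟩
  · rw [hd]; congr 1; ring
  · intro u hu v hv
    rw [hd] at hu hv
    have h1 : a + u ∈ Set.Icc 0 (dist x y) :=
      ⟨by linarith [ha.1, hu.1], by linarith [hb.2, hu.2]⟩
    have h2 : a + v ∈ Set.Icc 0 (dist x y) :=
      ⟨by linarith [ha.1, hv.1], by linarith [hb.2, hv.2]⟩
    rw [h.2.2 _ h1 _ h2]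
    congr 1; ring
  · rw [hd]
    have himg : (fun t => γ (a + t)) '' Set.Icc 0 (b - a)
        = γ '' ((fun t => a + t) '' Set.Icc 0 (b - a)) := (Set.image_image _ _ _).symm
    rw [himg, Set.image_const_add_Icc]
    congr 1 <;> ring_nf

end GP

theorem _root_.IsGeodesicArc.symm' {x y : X} {s : Set X} (h : IsGeodesicArc x y s) :
    IsGeodesicArc y x s := by
  obtain ⟨γ, h0, hL, hiso, hs⟩ := h
  have hd : dist y x = dist x y := dist_comm y x
  refine ⟨fun t => γ (dist x y - t), by simpa using hL, ?_, ?_, ?_⟩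
  · rw [hd]; simpa using h0
  · intro a ha b hb
    rw [hd] at ha hb
    have h1 : dist x y - a ∈ Set.Icc 0 (dist x y) := ⟨by linarith [ha.2], by linarith [ha.1]⟩
    have h2 : dist x y - b ∈ Set.Icc 0 (dist x y) := ⟨by linarith [hb.2], by linarith [hb.1]⟩
    rw [hiso _ h1 _ h2]
    rw [show dist x y - a - (dist x y - b) = -(a - b) by ring, abs_neg]
  · rw [hd, hs]
    have himg : (fun t => γ (dist x y - t)) '' Set.Icc 0 (dist x y)
        = γ '' ((fun t => dist x y - t) '' Set.Icc 0 (dist x y)) := (Set.image_image _ _ _).symm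
    rw [himg, Set.image_const_sub_Icc]
    norm_num

theorem _root_.IsGeodesicArc.left_mem {x y : X} {s : Set X} (h : IsGeodesicArc x y s) : x ∈ s := by
  obtain ⟨γ, h0, _, _, hs⟩ := h
  rw [hs]
  exact ⟨0, ⟨le_refl 0, dist_nonneg⟩, h0⟩

theorem _root_.IsGeodesicArc.right_mem {x y : X} {s : Set X} (h : IsGeodesicArc x y s) : y ∈ s := by
  obtain ⟨γ, _, hL, _, hs⟩ := h
  rw [hs]
  exact ⟨dist x y, ⟨dist_nonneg, le_refl _⟩, hL⟩

theorem _root_.IsGeodesicArc.isCompact' {x y : X} {s : Set X} (h : IsGeodesicArc x y s) :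
    IsCompact s := by
  obtain ⟨γ, hγ, hs⟩ := isGeodesicArc_iff.mp h
  rw [hs]
  exact isCompact_Icc.image_of_continuousOn hγ.continuousOn

theorem isGeodesicArc_singleton (x : X) : IsGeodesicArc x x ({x} : Set X) := by
  refine ⟨fun _ => x, rfl, rfl, ?_, ?_⟩
  · intro a ha b hb
    simp only [dist_self] at ha hb ⊢
    have : a = 0 := le_antisymm ha.2 ha.1
    have : b = 0 := le_antisymm hb.2 hb.1
    simp_all
  · simp

/-- clamping to [0, L] -/
def cl (L r : ℝ) : ℝ := max 0 (min r L)

theorem cl_mem {L : ℝ} (hL : 0 ≤ L) (r : ℝ) : cl L r ∈ Set.Icc 0 L :=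
  ⟨le_max_left _ _, max_le hL (min_le_right r L)⟩

theorem cl_eq {L r : ℝ} (hr : r ∈ Set.Icc 0 L) : cl L r = r := by
  rw [cl, min_eq_left hr.2, max_eq_right hr.1]

theorem continuous_cl (L : ℝ) : Continuous (cl L) :=
  continuous_const.max (continuous_id.min continuous_const)

/-- A loop which is injective on [0,1) gives a simple closed curve. -/
theorem isSimpleClosedCurve_of_loop {f : ℝ → X} (hc : ContinuousOn f (Set.Icc 0 1))
    (hper : f 0 = f 1) (hinj : Set.InjOn f (Set.Ico 0 1)) :
    IsSimpleClosedCurve (f '' Set.Ico 0 1) := by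
  refine ⟨AddCircle.liftIco 1 0 f, ?_, ?_, ?_⟩
  · exact AddCircle.liftIco_zero_continuous (by simpa using hper) (by simpa using hc)
  · intro u v huv
    obtain ⟨hu1, hu2⟩ := (AddCircle.equivIco 1 0 u).2
    obtain ⟨hv1, hv2⟩ := (AddCircle.equivIco 1 0 v).2
    have heq : f ((AddCircle.equivIco 1 0 u : ℝ)) = f ((AddCircle.equivIco 1 0 v : ℝ)) := huv
    have := hinj ⟨hu1, by linarith⟩ ⟨hv1, by linarith⟩ heq
    exact (AddCircle.equivIco 1 0).injective (Subtype.ext this)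
  · show Set.range (Set.restrict _ f ∘ (AddCircle.equivIco 1 0)) = _
    rw [Set.range_comp, Equiv.range_eq_univ, Set.image_univ, zero_add]
    exact (Set.image_eq_range f _).symm

end HypAux

namespace HypAux

open Set

variable {X : Type} [MetricSpace X]

theorem glue2 {x y : X} {s₁ s₂ : Set X} (hxy : x ≠ y)
    (h₁ : IsGeodesicArc x y s₁) (h₂ : IsGeodesicArc y x s₂)
    (h12 : s₁ ∩ s₂ = {x, y}) : IsSimpleClosedCurve (s₁ ∪ s₂) := by
  obtain ⟨γ₁, hγ₁, hs₁⟩ := isGeodesicArc_iff.mp h₁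
  obtain ⟨γ₂, hγ₂, hs₂⟩ := isGeodesicArc_iff.mp h₂
  set L := dist x y with hLdef
  have hL2 : dist y x = L := dist_comm y x
  have hLpos : 0 < L := dist_pos.mpr hxy
  have h10 : γ₁ 0 = x := hγ₁.1
  have h1L : γ₁ L = y := hγ₁.2.1
  have h1inj : Set.InjOn γ₁ (Set.Icc 0 L) := hγ₁.injOn
  have h20 : γ₂ 0 = y := hγ₂.1
  have h2L : γ₂ L = x := by rw [← hL2]; exact hγ₂.2.1
  have h2inj : Set.InjOn γ₂ (Set.Icc 0 L) := by
    have := hγ₂.injOn; rwa [hL2] at this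
  have hs₂' : s₂ = γ₂ '' Set.Icc 0 L := by rw [hs₂, hL2]
  have h0L : (0 : ℝ) ∈ Set.Icc (0:ℝ) L := ⟨le_refl _, hLpos.le⟩
  have hLL : L ∈ Set.Icc (0:ℝ) L := ⟨hLpos.le, le_refl _⟩
  set f : ℝ → X :=
    fun t => if t ≤ 1/2 then γ₁ (cl L (2*t*L)) else γ₂ (cl L ((2*t-1)*L)) with hfdef
  have hf1 : ∀ t : ℝ, t ≤ 1/2 → f t = γ₁ (cl L (2*t*L)) := fun t ht => if_pos ht
  have hf2 : ∀ t : ℝ, ¬(t ≤ 1/2) → f t = γ₂ (cl L ((2*t-1)*L)) := fun t ht => if_neg ht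
  have hcont : Continuous f := by
    apply Continuous.if_le
    · exact hγ₁.continuousOn.comp_continuous
        ((continuous_cl L).comp (by continuity)) (fun t => cl_mem hLpos.le _)
    · have hc2 : ContinuousOn γ₂ (Set.Icc 0 L) := by
        have := hγ₂.continuousOn; rwa [hL2] at this
      exact hc2.comp_continuous
        ((continuous_cl L).comp (by continuity)) (fun t => cl_mem hLpos.le _)
    · exact continuous_id
    · exact continuous_const
    · intro t ht
      subst ht
      rw [show 2*(1/2:ℝ)*L = L by ring, show (2*(1/2:ℝ)-1)*L = 0 by ring,
        cl_eq hLL, cl_eq h0L, h1L, h20]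
  have hf0 : f 0 = x := by
    rw [hf1 0 (by norm_num), show 2*(0:ℝ)*L = 0 by ring, cl_eq h0L, h10]
  have hfone : f 1 = x := by
    rw [hf2 1 (by norm_num), show (2*(1:ℝ)-1)*L = L by ring, cl_eq hLL, h2L]
  have hmix : ∀ s t : ℝ, s ∈ Set.Ico (0:ℝ) 1 → t ∈ Set.Ico (0:ℝ) 1 →
      s ≤ 1/2 → ¬(t ≤ 1/2) → f s ≠ f t := by
    intro s t hs ht hs2 ht2 heq
    push_neg at ht2
    have hps : 2*s*L ∈ Set.Icc (0:ℝ) L := ⟨by nlinarith [hs.1], by nlinarith⟩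
    have hpt : (2*t-1)*L ∈ Set.Icc (0:ℝ) L := ⟨by nlinarith, by nlinarith [ht.2]⟩
    rw [hf1 s hs2, hf2 t (by linarith), cl_eq hps, cl_eq hpt] at heq
    have hq1 : γ₁ (2*s*L) ∈ s₁ := by rw [hs₁]; exact Set.mem_image_of_mem _ hps
    have hq2 : γ₂ ((2*t-1)*L) ∈ s₂ := by rw [hs₂']; exact Set.mem_image_of_mem _ hpt
    have hmem : γ₁ (2*s*L) ∈ s₁ ∩ s₂ := ⟨hq1, heq ▸ hq2⟩
    rw [h12] at hmem
    rcases hmem with hm | hm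
    · -- the common point is x
      have e2 : (2*t-1)*L = L := h2inj hpt hLL (by rw [h2L, ← heq, hm])
      have : t = 1 := by
        have := mul_right_cancel₀ (ne_of_gt hLpos) (e2.trans (one_mul L).symm)
        linarith
      linarith [ht.2]
    · -- the common point is y
      rw [Set.mem_singleton_iff] at hm
      have e2 : (2*t-1)*L = 0 := h2inj hpt h0L (by rw [h20, ← heq, hm])
      have : t = 1/2 := by
        rcases mul_eq_zero.mp e2 with h | h
        · linarith
        · exact absurd h (ne_of_gt hLpos)
      linarith
  have hinj : Set.InjOn f (Set.Ico 0 1) := by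
    intro s hs t ht heq
    by_cases hc1 : s ≤ 1/2 <;> by_cases hc2 : t ≤ 1/2
    · have hps : 2*s*L ∈ Set.Icc (0:ℝ) L := ⟨by nlinarith [hs.1], by nlinarith⟩
      have hpt : 2*t*L ∈ Set.Icc (0:ℝ) L := ⟨by nlinarith [ht.1], by nlinarith⟩
      rw [hf1 s hc1, hf1 t hc2, cl_eq hps, cl_eq hpt] at heq
      have := h1inj hps hpt heq
      have := mul_right_cancel₀ (ne_of_gt hLpos) this
      linarith
    · exact absurd heq (hmix s t hs ht hc1 hc2)
    · exact absurd heq.symm (hmix t s ht hs hc2 hc1)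
    · push_neg at hc1 hc2
      have hps : (2*s-1)*L ∈ Set.Icc (0:ℝ) L := ⟨by nlinarith, by nlinarith [hs.2]⟩
      have hpt : (2*t-1)*L ∈ Set.Icc (0:ℝ) L := ⟨by nlinarith, by nlinarith [ht.2]⟩
      rw [hf2 s (by linarith), hf2 t (by linarith), cl_eq hps, cl_eq hpt] at heq
      have := h2inj hps hpt heq
      have := mul_right_cancel₀ (ne_of_gt hLpos) this
      linarith
  have himg : f '' Set.Ico 0 1 = s₁ ∪ s₂ := by
    apply Set.Subset.antisymm
    · rintro q ⟨t, _, rfl⟩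
      by_cases hc1 : t ≤ 1/2
      · left; rw [hf1 t hc1, hs₁]; exact Set.mem_image_of_mem _ (cl_mem hLpos.le _)
      · right; rw [hf2 t hc1, hs₂']; exact Set.mem_image_of_mem _ (cl_mem hLpos.le _)
    · rintro q (hq | hq)
      · rw [hs₁] at hq
        obtain ⟨r, hr, rfl⟩ := hq
        refine ⟨r/(2*L), ⟨div_nonneg hr.1 (by positivity), ?_⟩, ?_⟩
        · rw [div_lt_one (by positivity)]; nlinarith [hr.2]
        · have hcond : r/(2*L) ≤ 1/2 := by
            rw [div_le_iff₀ (by positivity)]; nlinarith [hr.2]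
          rw [hf1 _ hcond, show 2*(r/(2*L))*L = r by field_simp, cl_eq hr]
      · rw [hs₂'] at hq
        obtain ⟨r, hr, rfl⟩ := hq
        rcases eq_or_lt_of_le hr.1 with hr0 | hr0
        · -- r = 0 : the point is y = f (1/2)
          refine ⟨1/2, ⟨by norm_num, by norm_num⟩, ?_⟩
          rw [hf1 _ (le_refl _), show 2*(1/2:ℝ)*L = L by ring, cl_eq hLL, h1L, ← hr0, h20]
        rcases eq_or_lt_of_le hr.2 with hrL | hrL
        · -- r = L : the point is x = f 0
          exact ⟨0, ⟨le_refl _, by norm_num⟩, by rw [hf0, ← h2L, hrL]⟩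
        · refine ⟨(r+L)/(2*L), ⟨div_nonneg (by linarith [hr.1]) (by positivity), ?_⟩, ?_⟩
          · rw [div_lt_one (by positivity)]; nlinarith
          · have hcond : ¬((r+L)/(2*L) ≤ 1/2) := by
              rw [not_le, lt_div_iff₀ (by positivity)]; nlinarith
            rw [hf2 _ hcond, show (2*((r+L)/(2*L))-1)*L = r by field_simp; ring, cl_eq hr]
  rw [← himg]
  exact isSimpleClosedCurve_of_loop hcont.continuousOn (hf0.trans hfone.symm) hinj

end HypAux

namespace HypAux

open Set

variable {X : Type} [MetricSpace X]

theorem glue3 {x y z : X} {s₁ s₂ s₃ : Set X} (hxy : x ≠ y) (hyz : y ≠ z) (hzx : z ≠ x)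
    (h₁ : IsGeodesicArc x y s₁) (h₂ : IsGeodesicArc y z s₂) (h₃ : IsGeodesicArc z x s₃)
    (h12 : s₁ ∩ s₂ ⊆ {y}) (h23 : s₂ ∩ s₃ ⊆ {z}) (h31 : s₃ ∩ s₁ ⊆ {x}) :
    IsSimpleClosedCurve (s₁ ∪ s₂ ∪ s₃) := by
  obtain ⟨γ₁, hγ₁, hs₁⟩ := isGeodesicArc_iff.mp h₁
  obtain ⟨γ₂, hγ₂, hs₂⟩ := isGeodesicArc_iff.mp h₂
  obtain ⟨γ₃, hγ₃, hs₃⟩ := isGeodesicArc_iff.mp h₃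
  set L₁ := dist x y with hL1def
  set L₂ := dist y z with hL2def
  set L₃ := dist z x with hL3def
  have hL1 : 0 < L₁ := dist_pos.mpr hxy
  have hL2 : 0 < L₂ := dist_pos.mpr hyz
  have hL3 : 0 < L₃ := dist_pos.mpr hzx
  have h10 : γ₁ 0 = x := hγ₁.1
  have h1L : γ₁ L₁ = y := hγ₁.2.1
  have h20 : γ₂ 0 = y := hγ₂.1
  have h2L : γ₂ L₂ = z := hγ₂.2.1
  have h30 : γ₃ 0 = z := hγ₃.1
  have h3L : γ₃ L₃ = x := hγ₃.2.1
  have h1inj : Set.InjOn γ₁ (Set.Icc 0 L₁) := hγ₁.injOn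
  have h2inj : Set.InjOn γ₂ (Set.Icc 0 L₂) := hγ₂.injOn
  have h3inj : Set.InjOn γ₃ (Set.Icc 0 L₃) := hγ₃.injOn
  have h0L1 : (0:ℝ) ∈ Set.Icc (0:ℝ) L₁ := ⟨le_refl _, hL1.le⟩
  have hLL1 : L₁ ∈ Set.Icc (0:ℝ) L₁ := ⟨hL1.le, le_refl _⟩
  have h0L2 : (0:ℝ) ∈ Set.Icc (0:ℝ) L₂ := ⟨le_refl _, hL2.le⟩
  have hLL2 : L₂ ∈ Set.Icc (0:ℝ) L₂ := ⟨hL2.le, le_refl _⟩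
  have h0L3 : (0:ℝ) ∈ Set.Icc (0:ℝ) L₃ := ⟨le_refl _, hL3.le⟩
  have hLL3 : L₃ ∈ Set.Icc (0:ℝ) L₃ := ⟨hL3.le, le_refl _⟩
  have hc1 : Continuous fun t : ℝ => γ₁ (cl L₁ (3*t*L₁)) :=
    hγ₁.continuousOn.comp_continuous
      ((continuous_cl L₁).comp (((continuous_const.mul continuous_id).mul continuous_const :
        Continuous fun t : ℝ => 3*t*L₁))) (fun t => cl_mem hL1.le _)
  have hc2 : Continuous fun t : ℝ => γ₂ (cl L₂ ((3*t-1)*L₂)) :=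
    hγ₂.continuousOn.comp_continuous
      ((continuous_cl L₂).comp ((((continuous_const.mul continuous_id).sub
        continuous_const).mul continuous_const :
        Continuous fun t : ℝ => (3*t-1)*L₂))) (fun t => cl_mem hL2.le _)
  have hc3 : Continuous fun t : ℝ => γ₃ (cl L₃ ((3*t-2)*L₃)) :=
    hγ₃.continuousOn.comp_continuous
      ((continuous_cl L₃).comp ((((continuous_const.mul continuous_id).sub
        continuous_const).mul continuous_const :
        Continuous fun t : ℝ => (3*t-2)*L₃))) (fun t => cl_mem hL3.le _)
  set f : ℝ → X := fun t =>
    if t ≤ 1/3 then γ₁ (cl L₁ (3*t*L₁))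
    else if t ≤ 2/3 then γ₂ (cl L₂ ((3*t-1)*L₂))
    else γ₃ (cl L₃ ((3*t-2)*L₃)) with hfdef
  have hf1 : ∀ t : ℝ, t ≤ 1/3 → f t = γ₁ (cl L₁ (3*t*L₁)) := fun t ht => if_pos ht
  have hf2 : ∀ t : ℝ, ¬(t ≤ 1/3) → t ≤ 2/3 → f t = γ₂ (cl L₂ ((3*t-1)*L₂)) := by
    intro t ht ht2
    rw [hfdef]
    simp only [if_neg ht, if_pos ht2]
  have hf3 : ∀ t : ℝ, ¬(t ≤ 2/3) → f t = γ₃ (cl L₃ ((3*t-2)*L₃)) := by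
    intro t ht
    have ht1 : ¬(t ≤ 1/3) := fun h => ht (by linarith)
    rw [hfdef]
    simp only [if_neg ht1, if_neg ht]
  have hcont : Continuous f := by
    apply Continuous.if_le
    · exact hc1
    · apply Continuous.if_le hc2 hc3 continuous_id continuous_const
      intro t ht
      subst ht
      rw [show (3*(2/3:ℝ)-1)*L₂ = L₂ by ring, show (3*(2/3:ℝ)-2)*L₃ = 0 by ring,
        cl_eq hLL2, cl_eq h0L3, h2L, h30]
    · exact continuous_id
    · exact continuous_const
    · intro t ht
      subst ht
      rw [if_pos (by norm_num : (1/3:ℝ) ≤ 2/3),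
        show 3*(1/3:ℝ)*L₁ = L₁ by ring, show (3*(1/3:ℝ)-1)*L₂ = 0 by ring,
        cl_eq hLL1, cl_eq h0L2, h1L, h20]
  have hf0 : f 0 = x := by
    rw [hf1 0 (by norm_num), show 3*(0:ℝ)*L₁ = 0 by ring, cl_eq h0L1, h10]
  have hfone : f 1 = x := by
    rw [hf3 1 (by norm_num), show (3*(1:ℝ)-2)*L₃ = L₃ by ring, cl_eq hLL3, h3L]
  -- membership of the three kinds of values
  have hm1 : ∀ s : ℝ, 0 ≤ s → s ≤ 1/3 → 3*s*L₁ ∈ Set.Icc (0:ℝ) L₁ :=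
    fun s h0 h1 => ⟨by nlinarith, by nlinarith⟩
  have hm2 : ∀ s : ℝ, ¬(s ≤ 1/3) → s ≤ 2/3 → (3*s-1)*L₂ ∈ Set.Icc (0:ℝ) L₂ := by
    intro s h0 h1; push_neg at h0; exact ⟨by nlinarith, by nlinarith⟩
  have hm3 : ∀ s : ℝ, ¬(s ≤ 2/3) → s < 1 → (3*s-2)*L₃ ∈ Set.Icc (0:ℝ) L₃ := by
    intro s h0 h1; push_neg at h0; exact ⟨by nlinarith, by nlinarith⟩
  have hmix12 : ∀ s t : ℝ, 0 ≤ s → s ≤ 1/3 → ¬(t ≤ 1/3) → t ≤ 2/3 → f s ≠ f t := by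
    intro s t hs0 hs1 ht1 ht2 heq
    have hps := hm1 s hs0 hs1
    have hpt := hm2 t ht1 ht2
    rw [hf1 s hs1, hf2 t ht1 ht2, cl_eq hps, cl_eq hpt] at heq
    have hmem : γ₂ ((3*t-1)*L₂) ∈ s₁ ∩ s₂ := by
      constructor
      · rw [hs₁, ← heq]; exact Set.mem_image_of_mem _ hps
      · rw [hs₂]; exact Set.mem_image_of_mem _ hpt
    have hy := h12 hmem
    rw [Set.mem_singleton_iff] at hy
    have e2 : (3*t-1)*L₂ = 0 := h2inj hpt h0L2 (by rw [h20, hy])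
    have : t = 1/3 := by
      rcases mul_eq_zero.mp e2 with h | h
      · linarith
      · exact absurd h (ne_of_gt hL2)
    exact ht1 (by linarith)
  have hmix13 : ∀ s t : ℝ, 0 ≤ s → s ≤ 1/3 → ¬(t ≤ 2/3) → t < 1 → f s ≠ f t := by
    intro s t hs0 hs1 ht1 ht2 heq
    have hps := hm1 s hs0 hs1
    have hpt := hm3 t ht1 ht2
    rw [hf1 s hs1, hf3 t ht1, cl_eq hps, cl_eq hpt] at heq
    have hmem : γ₃ ((3*t-2)*L₃) ∈ s₃ ∩ s₁ := by
      constructor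
      · rw [hs₃]; exact Set.mem_image_of_mem _ hpt
      · rw [hs₁, ← heq]; exact Set.mem_image_of_mem _ hps
    have hx := h31 hmem
    rw [Set.mem_singleton_iff] at hx
    have e2 : (3*t-2)*L₃ = L₃ := h3inj hpt hLL3 (by rw [h3L, hx])
    have : t = 1 := by
      have := mul_right_cancel₀ (ne_of_gt hL3) (e2.trans (one_mul L₃).symm)
      linarith
    linarith
  have hmix23 : ∀ s t : ℝ, ¬(s ≤ 1/3) → s ≤ 2/3 → ¬(t ≤ 2/3) → t < 1 → f s ≠ f t := by
    intro s t hs0 hs1 ht1 ht2 heq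
    have hps := hm2 s hs0 hs1
    have hpt := hm3 t ht1 ht2
    rw [hf2 s hs0 hs1, hf3 t ht1, cl_eq hps, cl_eq hpt] at heq
    have hmem : γ₃ ((3*t-2)*L₃) ∈ s₂ ∩ s₃ := by
      constructor
      · rw [hs₂, ← heq]; exact Set.mem_image_of_mem _ hps
      · rw [hs₃]; exact Set.mem_image_of_mem _ hpt
    have hz := h23 hmem
    rw [Set.mem_singleton_iff] at hz
    have e2 : (3*t-2)*L₃ = 0 := h3inj hpt h0L3 (by rw [h30, hz])
    have : t = 2/3 := by
      rcases mul_eq_zero.mp e2 with h | h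
      · linarith
      · exact absurd h (ne_of_gt hL3)
    exact ht1 (by linarith)
  have hinj : Set.InjOn f (Set.Ico 0 1) := by
    intro s hs t ht heq
    by_cases hcs1 : s ≤ 1/3 <;> by_cases hct1 : t ≤ 1/3
    · have hps := hm1 s hs.1 hcs1
      have hpt := hm1 t ht.1 hct1
      rw [hf1 s hcs1, hf1 t hct1, cl_eq hps, cl_eq hpt] at heq
      have := h1inj hps hpt heq
      have h3s : (3:ℝ)*s = 3*t := mul_right_cancel₀ (ne_of_gt hL1) this
      linarith
    · by_cases hct2 : t ≤ 2/3
      · exact absurd heq (hmix12 s t hs.1 hcs1 hct1 hct2)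
      · exact absurd heq (hmix13 s t hs.1 hcs1 hct2 ht.2)
    · by_cases hcs2 : s ≤ 2/3
      · exact absurd heq.symm (hmix12 t s ht.1 hct1 hcs1 hcs2)
      · exact absurd heq.symm (hmix13 t s ht.1 hct1 hcs2 hs.2)
    · by_cases hcs2 : s ≤ 2/3 <;> by_cases hct2 : t ≤ 2/3
      · have hps := hm2 s hcs1 hcs2
        have hpt := hm2 t hct1 hct2
        rw [hf2 s hcs1 hcs2, hf2 t hct1 hct2, cl_eq hps, cl_eq hpt] at heq
        have := h2inj hps hpt heq
        have h3s : (3:ℝ)*s - 1 = 3*t - 1 := mul_right_cancel₀ (ne_of_gt hL2) this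
        linarith
      · exact absurd heq (hmix23 s t hcs1 hcs2 hct2 ht.2)
      · exact absurd heq.symm (hmix23 t s hct1 hct2 hcs2 hs.2)
      · have hps := hm3 s hcs2 hs.2
        have hpt := hm3 t hct2 ht.2
        rw [hf3 s hcs2, hf3 t hct2, cl_eq hps, cl_eq hpt] at heq
        have := h3inj hps hpt heq
        have h3s : (3:ℝ)*s - 2 = 3*t - 2 := mul_right_cancel₀ (ne_of_gt hL3) this
        linarith
  have himg : f '' Set.Ico 0 1 = s₁ ∪ s₂ ∪ s₃ := by
    apply Set.Subset.antisymm
    · rintro q ⟨t, _, rfl⟩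
      by_cases hc1 : t ≤ 1/3
      · left; left; rw [hf1 t hc1, hs₁]; exact Set.mem_image_of_mem _ (cl_mem hL1.le _)
      · by_cases hc2 : t ≤ 2/3
        · left; right; rw [hf2 t hc1 hc2, hs₂]; exact Set.mem_image_of_mem _ (cl_mem hL2.le _)
        · right; rw [hf3 t hc2, hs₃]; exact Set.mem_image_of_mem _ (cl_mem hL3.le _)
    · rintro q ((hq | hq) | hq)
      · rw [hs₁] at hq
        obtain ⟨r, hr, rfl⟩ := hq
        refine ⟨r/(3*L₁), ⟨div_nonneg hr.1 (by positivity), ?_⟩, ?_⟩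
        · rw [div_lt_one (by positivity)]; nlinarith [hr.2]
        · have hcond : r/(3*L₁) ≤ 1/3 := by
            rw [div_le_iff₀ (by positivity)]; nlinarith [hr.2]
          rw [hf1 _ hcond, show 3*(r/(3*L₁))*L₁ = r by field_simp, cl_eq hr]
      · rw [hs₂] at hq
        obtain ⟨r, hr, rfl⟩ := hq
        rcases eq_or_lt_of_le hr.1 with hr0 | hr0
        · refine ⟨1/3, ⟨by norm_num, by norm_num⟩, ?_⟩
          rw [hf1 _ (le_refl _), show 3*(1/3:ℝ)*L₁ = L₁ by ring, cl_eq hLL1, h1L, ← hr0, h20]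
        · refine ⟨(r+L₂)/(3*L₂), ⟨div_nonneg (by linarith [hr.1]) (by positivity), ?_⟩, ?_⟩
          · rw [div_lt_one (by positivity)]; nlinarith [hr.2]
          · have hcond1 : ¬((r+L₂)/(3*L₂) ≤ 1/3) := by
              rw [not_le, lt_div_iff₀ (by positivity)]; nlinarith
            have hcond2 : (r+L₂)/(3*L₂) ≤ 2/3 := by
              rw [div_le_iff₀ (by positivity)]; nlinarith [hr.2]
            rw [hf2 _ hcond1 hcond2,
              show (3*((r+L₂)/(3*L₂))-1)*L₂ = r by field_simp; ring, cl_eq hr]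
      · rw [hs₃] at hq
        obtain ⟨r, hr, rfl⟩ := hq
        rcases eq_or_lt_of_le hr.1 with hr0 | hr0
        · refine ⟨2/3, ⟨by norm_num, by norm_num⟩, ?_⟩
          rw [hf2 _ (by norm_num) (le_refl _), show (3*(2/3:ℝ)-1)*L₂ = L₂ by ring,
            cl_eq hLL2, h2L, ← hr0, h30]
        rcases eq_or_lt_of_le hr.2 with hrL | hrL
        · exact ⟨0, ⟨le_refl _, by norm_num⟩, by rw [hf0, ← h3L, hrL]⟩
        · refine ⟨(r+2*L₃)/(3*L₃), ⟨div_nonneg (by linarith [hr.1]) (by positivity), ?_⟩, ?_⟩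
          · rw [div_lt_one (by positivity)]; nlinarith
          · have hcond : ¬((r+2*L₃)/(3*L₃) ≤ 2/3) := by
              rw [not_le, lt_div_iff₀ (by positivity)]; nlinarith
            rw [hf3 _ hcond,
              show (3*((r+2*L₃)/(3*L₃))-2)*L₃ = r by field_simp; ring, cl_eq hr]
  rw [← himg]
  exact isSimpleClosedCurve_of_loop hcont.continuousOn (hf0.trans hfone.symm) hinj

end HypAux

namespace HypAux

open Set Metric

variable {X : Type} [MetricSpace X]

def cycSup (X : Type) [MetricSpace X] : ℝ≥0∞ :=
  ⨆ (x : X) (y : X) (z : X) (s₁ : Set X) (s₂ : Set X) (s₃ : Set X)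
    (_ : IsGeodTriangle x y z s₁ s₂ s₃ ∧ IsSimpleClosedCurve (s₁ ∪ s₂ ∪ s₃)),
    triThin s₁ s₂ s₃

theorem le_cycSup {x y z : X} {s₁ s₂ s₃ : Set X}
    (h : IsGeodTriangle x y z s₁ s₂ s₃ ∧ IsSimpleClosedCurve (s₁ ∪ s₂ ∪ s₃)) :
    triThin s₁ s₂ s₃ ≤ cycSup X := by
  apply le_iSup_of_le x; apply le_iSup_of_le y; apply le_iSup_of_le z
  apply le_iSup_of_le s₁; apply le_iSup_of_le s₂; apply le_iSup_of_le s₃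
  exact le_iSup_of_le h (le_refl _)

theorem contrib {p A B C : X} {t₁ t₂ t₃ F : Set X}
    (h : IsGeodTriangle A B C t₁ t₂ t₃) (hscc : IsSimpleClosedCurve (t₁ ∪ t₂ ∪ t₃))
    (hp : p ∈ t₁) (hsub : t₂ ∪ t₃ ⊆ F) (hne : (t₂ ∪ t₃).Nonempty) :
    ENNReal.ofReal (infDist p F) ≤ cycSup X := by
  have h1 : infDist p F ≤ infDist p (t₂ ∪ t₃) := infDist_le_infDist_of_subset hsub hne
  calc ENNReal.ofReal (infDist p F) ≤ ENNReal.ofReal (infDist p (t₂ ∪ t₃)) :=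
        ENNReal.ofReal_le_ofReal h1
    _ ≤ sideThin t₁ (t₂ ∪ t₃) := by
        show _ ≤ ⨆ q ∈ t₁, ENNReal.ofReal (infDist q (t₂ ∪ t₃))
        exact le_iSup₂ (f := fun q (_ : q ∈ t₁) => ENNReal.ofReal (infDist q (t₂ ∪ t₃))) p hp
    _ ≤ triThin t₁ t₂ t₃ := le_max_left _ _
    _ ≤ cycSup X := le_cycSup ⟨h, hscc⟩

theorem bigon {u v A B p : X} {S α F : Set X}
    (hS : IsGeodesicArc u v S) (hα : IsGeodesicArc A B α) (hAB : A ≠ B)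
    (hA : A ∈ S) (hB : B ∈ S)
    (hαint : ∀ q ∈ α, q ∈ S → q = A ∨ q = B) (hp : p ∈ α)
    (hSF : S ⊆ F) :
    ENNReal.ofReal (infDist p F) ≤ cycSup X := by
  obtain ⟨γ, hγ, hs⟩ := isGeodesicArc_iff.mp hS
  rw [hs] at hA hB
  obtain ⟨c, hc, hcA⟩ := hA
  obtain ⟨d, hd, hdB⟩ := hB
  have hcd : c ≠ d := by rintro rfl; exact hAB (hcA.symm.trans hdB)
  have hβ : ∃ β : Set X, IsGeodesicArc B A β ∧ β ⊆ S ∧ A ∈ β ∧ B ∈ β := by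
    rcases lt_or_gt_of_ne hcd with hlt | hlt
    · refine ⟨γ '' Set.Icc c d, ?_, ?_, ?_, ?_⟩
      · have := hγ.subarc hc hd hlt.le
        rw [hcA, hdB] at this
        exact this.symm'
      · rw [hs]; exact Set.image_mono (Set.Icc_subset_Icc hc.1 hd.2)
      · exact ⟨c, ⟨le_refl _, hlt.le⟩, hcA⟩
      · exact ⟨d, ⟨hlt.le, le_refl _⟩, hdB⟩
    · refine ⟨γ '' Set.Icc d c, ?_, ?_, ?_, ?_⟩
      · have := hγ.subarc hd hc hlt.le
        rw [hcA, hdB] at this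
        exact this
      · rw [hs]; exact Set.image_mono (Set.Icc_subset_Icc hd.1 hc.2)
      · exact ⟨c, ⟨hlt.le, le_refl _⟩, hcA⟩
      · exact ⟨d, ⟨le_refl _, hlt.le⟩, hdB⟩
  obtain ⟨β, hβarc, hβS, hAβ, hBβ⟩ := hβ
  have hαβ : α ∩ β = {A, B} := by
    apply Set.Subset.antisymm
    · rintro q ⟨hq1, hq2⟩
      rcases hαint q hq1 (hβS hq2) with h | h
      · exact Or.inl h
      · exact Or.inr h
    · rintro q (rfl | hq)
      · exact ⟨hα.left_mem, hAβ⟩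
      · rw [Set.mem_singleton_iff] at hq; subst hq
        exact ⟨hα.right_mem, hBβ⟩
  have hscc := glue2 hAB hα hβarc hαβ
  have hAαβ : A ∈ α ∪ β := Or.inl hα.left_mem
  have huni : α ∪ β ∪ {A} = α ∪ β :=
    Set.union_eq_self_of_subset_right (Set.singleton_subset_iff.mpr hAαβ)
  have htri : IsGeodTriangle A B A α β ({A} : Set X) :=
    ⟨hα, hβarc, isGeodesicArc_singleton A⟩
  refine contrib htri (by rwa [huni]) hp ?_ ⟨B, Or.inl hBβ⟩
  rintro q (hq | hq)
  · exact hSF (hβS hq)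
  · rw [Set.mem_singleton_iff] at hq; subst hq
    exact hSF (by rw [hs]; exact ⟨c, hc, hcA⟩)

end HypAux

namespace HypAux

open Set Metric

variable {X : Type} [MetricSpace X]

theorem trigon {A B p u v u' v' : X} {α S T F : Set X}
    (hα : IsGeodesicArc A B α) (hp : p ∈ α) (hAB : A ≠ B)
    (hS : IsGeodesicArc u v S) (hT : IsGeodesicArc u' v' T)
    (hA : A ∈ T) (hAnS : A ∉ S) (hB : B ∈ S) (hBnT : B ∉ T)
    (hαint : ∀ q ∈ α, q ∈ S ∪ T → q = A ∨ q = B)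
    (hmeet : (S ∩ T).Nonempty)
    (hSF : S ⊆ F) (hTF : T ⊆ F) :
    ENNReal.ofReal (infDist p F) ≤ cycSup X := by
  obtain ⟨γ, hγ, hs⟩ := isGeodesicArc_iff.mp hS
  set L := dist u v with hLdef
  rw [hs] at hB
  obtain ⟨d, hd, hdB⟩ := hB
  obtain ⟨m0, hm0S, hm0T⟩ := hmeet
  rw [hs] at hm0S
  obtain ⟨m, hm, hmEq⟩ := hm0S
  have hTclosed : IsClosed T := hT.isCompact'.isClosed
  have hmd : m ≠ d := fun h => hBnT (by rw [← hdB, ← h, hmEq]; exact hm0T)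
  -- first hit of T along S starting from d towards m
  obtain ⟨e, he, heT, hfirst⟩ :
      ∃ e, e ∈ Set.Icc 0 L ∧ γ e ∈ T ∧
        ∀ t, min d e ≤ t → t ≤ max d e → γ t ∈ T → t = e := by
    rcases lt_or_gt_of_ne hmd with hlt | hlt
    · -- m < d : last hit before d
      set W := {t : ℝ | t ∈ Set.Icc 0 d ∧ γ t ∈ T} with hWdef
      have hWclosed : IsClosed W := by
        have : W = Set.Icc 0 d ∩ γ ⁻¹' T := rfl
        rw [this]
        exact ContinuousOn.preimage_isClosed_of_isClosed
          (hγ.continuousOn.mono (Set.Icc_subset_Icc le_rfl hd.2)) isClosed_Icc hTclosed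
      have hWne : W.Nonempty := ⟨m, ⟨hm.1, hlt.le⟩, hmEq ▸ hm0T⟩
      have hWbdd : BddAbove W := ⟨d, fun t ht => ht.1.2⟩
      have heW : sSup W ∈ W := hWclosed.csSup_mem hWne hWbdd
      refine ⟨sSup W, ⟨heW.1.1, le_trans heW.1.2 hd.2⟩, heW.2, ?_⟩
      intro t h1 h2 hT'
      have hed : sSup W ≠ d := fun h => hBnT (by rw [← hdB, ← h]; exact heW.2)
      have hedlt : sSup W < d := lt_of_le_of_ne heW.1.2 hed
      rw [min_eq_right hedlt.le] at h1
      rw [max_eq_left hedlt.le] at h2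
      have : t ≤ sSup W := le_csSup hWbdd ⟨⟨le_trans heW.1.1 h1, h2⟩, hT'⟩
      linarith
    · -- d < m : first hit after d
      set W := {t : ℝ | t ∈ Set.Icc d L ∧ γ t ∈ T} with hWdef
      have hWclosed : IsClosed W := by
        have : W = Set.Icc d L ∩ γ ⁻¹' T := rfl
        rw [this]
        exact ContinuousOn.preimage_isClosed_of_isClosed
          (hγ.continuousOn.mono (Set.Icc_subset_Icc hd.1 le_rfl)) isClosed_Icc hTclosed
      have hWne : W.Nonempty := ⟨m, ⟨hlt.le, hm.2⟩, hmEq ▸ hm0T⟩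
      have hWbdd : BddBelow W := ⟨d, fun t ht => ht.1.1⟩
      have heW : sInf W ∈ W := hWclosed.csInf_mem hWne hWbdd
      refine ⟨sInf W, ⟨le_trans hd.1 heW.1.1, heW.1.2⟩, heW.2, ?_⟩
      intro t h1 h2 hT'
      have hed : sInf W ≠ d := fun h => hBnT (by rw [← hdB, ← h]; exact heW.2)
      have hedgt : d < sInf W := lt_of_le_of_ne heW.1.1 hed.symm
      rw [min_eq_left hedgt.le] at h1
      rw [max_eq_right hedgt.le] at h2
      have : sInf W ≤ t := csInf_le hWbdd ⟨⟨h1, le_trans h2 heW.1.2⟩, hT'⟩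
      linarith
  set w := γ e with hwdef
  have hwS : w ∈ S := by rw [hs]; exact ⟨e, he, rfl⟩
  have hde : d ≠ e := fun h => hBnT (by rw [← hdB, h]; exact heT)
  have hβ : ∃ β : Set X, IsGeodesicArc B w β ∧ β ⊆ S ∧
      (∀ q ∈ β, q ∈ T → q = w) ∧ B ∈ β ∧ w ∈ β := by
    rcases lt_or_gt_of_ne hde with hlt | hlt
    · refine ⟨γ '' Set.Icc d e, ?_, ?_, ?_, ?_, ?_⟩
      · have := hγ.subarc hd he hlt.le
        rwa [hdB] at this
      · rw [hs]; exact Set.image_mono (Set.Icc_subset_Icc hd.1 he.2)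
      · rintro q ⟨t, ht, rfl⟩ hqT
        rw [hfirst t (by rw [min_eq_left hlt.le]; exact ht.1)
          (by rw [max_eq_right hlt.le]; exact ht.2) hqT]
      · exact ⟨d, ⟨le_refl _, hlt.le⟩, hdB⟩
      · exact ⟨e, ⟨hlt.le, le_refl _⟩, rfl⟩
    · refine ⟨γ '' Set.Icc e d, ?_, ?_, ?_, ?_, ?_⟩
      · have := hγ.subarc he hd hlt.le
        rw [hdB] at this
        exact this.symm'
      · rw [hs]; exact Set.image_mono (Set.Icc_subset_Icc he.1 hd.2)
      · rintro q ⟨t, ht, rfl⟩ hqT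
        rw [hfirst t (by rw [min_eq_right hlt.le]; exact ht.1)
          (by rw [max_eq_left hlt.le]; exact ht.2) hqT]
      · exact ⟨d, ⟨hlt.le, le_refl _⟩, hdB⟩
      · exact ⟨e, ⟨le_refl _, hlt.le⟩, rfl⟩
  obtain ⟨β, hβarc, hβS, hβT, hBβ, hwβ⟩ := hβ
  have hwA : w ≠ A := fun h => hAnS (h ▸ hwS)
  have hBw : B ≠ w := fun h => hBnT (h ▸ heT)
  -- the arc σ from w to A inside T
  obtain ⟨γ', hγ', hs'⟩ := isGeodesicArc_iff.mp hT
  rw [hs'] at hA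
  obtain ⟨a', ha', haA⟩ := hA
  have hwT' : w ∈ γ' '' Set.Icc 0 (dist u' v') := by rw [← hs']; exact heT
  obtain ⟨e', he', heW⟩ := hwT'
  have hea : e' ≠ a' := fun h => hwA (by rw [← heW, h, haA])
  have hσ : ∃ σ : Set X, IsGeodesicArc w A σ ∧ σ ⊆ T ∧ w ∈ σ ∧ A ∈ σ := by
    rcases lt_or_gt_of_ne hea with hlt | hlt
    · refine ⟨γ' '' Set.Icc e' a', ?_, ?_, ?_, ?_⟩
      · have := hγ'.subarc he' ha' hlt.le
        rwa [heW, haA] at this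
      · rw [hs']; exact Set.image_mono (Set.Icc_subset_Icc he'.1 ha'.2)
      · exact ⟨e', ⟨le_refl _, hlt.le⟩, heW⟩
      · exact ⟨a', ⟨hlt.le, le_refl _⟩, haA⟩
    · refine ⟨γ' '' Set.Icc a' e', ?_, ?_, ?_, ?_⟩
      · have := hγ'.subarc ha' he' hlt.le
        rw [heW, haA] at this
        exact this.symm'
      · rw [hs']; exact Set.image_mono (Set.Icc_subset_Icc ha'.1 he'.2)
      · exact ⟨e', ⟨hlt.le, le_refl _⟩, heW⟩
      · exact ⟨a', ⟨le_refl _, hlt.le⟩, haA⟩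
  obtain ⟨σ, hσarc, hσT, hwσ, hAσ⟩ := hσ
  -- pairwise intersections
  have h12 : α ∩ β ⊆ {B} := by
    rintro q ⟨hq1, hq2⟩
    rcases hαint q hq1 (Or.inl (hβS hq2)) with h | h
    · exact absurd (h ▸ hβS hq2) hAnS
    · exact h
  have h23 : β ∩ σ ⊆ {w} := fun q hq => hβT q hq.1 (hσT hq.2)
  have h31 : σ ∩ α ⊆ {A} := by
    rintro q ⟨hq1, hq2⟩
    rcases hαint q hq2 (Or.inr (hσT hq1)) with h | h
    · exact h
    · exact absurd (h ▸ hσT hq1) hBnT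
  have hscc := glue3 hAB hBw hwA hα hβarc hσarc h12 h23 h31
  have htri : IsGeodTriangle A B w α β σ := ⟨hα, hβarc, hσarc⟩
  refine contrib htri hscc hp ?_ ⟨w, Or.inr hwσ⟩
  rintro q (hq | hq)
  · exact hSF (hβS hq)
  · exact hTF (hσT hq)

end HypAux

namespace HypAux

open Set Metric

variable {X : Type} [MetricSpace X]

theorem side_le {x y z : X} {s₁ s₂ s₃ : Set X} (h : IsGeodTriangle x y z s₁ s₂ s₃) :
    sideThin s₁ (s₂ ∪ s₃) ≤ cycSup X := by
  obtain ⟨h₁, h₂, h₃⟩ := h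
  show (⨆ p ∈ s₁, ENNReal.ofReal (infDist p (s₂ ∪ s₃))) ≤ cycSup X
  refine iSup₂_le fun p hp => ?_
  rcases le_or_gt (infDist p (s₂ ∪ s₃)) 0 with hD | hD
  · rw [ENNReal.ofReal_eq_zero.mpr hD]; exact zero_le
  have hpF : p ∉ s₂ ∪ s₃ := fun hm => absurd (infDist_zero_of_mem hm) (by linarith)
  obtain ⟨γ₁, hγ₁, hs₁⟩ := isGeodesicArc_iff.mp h₁
  set L := dist x y with hLdef
  rw [hs₁] at hp
  obtain ⟨tp, htp, htpEq⟩ := hp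
  have hFclosed : IsClosed (s₂ ∪ s₃) := (h₂.isCompact'.union h₃.isCompact').isClosed
  -- last exit point before p
  set Sa := {t : ℝ | t ∈ Set.Icc 0 tp ∧ γ₁ t ∈ s₂ ∪ s₃} with hSadef
  have hSaclosed : IsClosed Sa := by
    have : Sa = Set.Icc 0 tp ∩ γ₁ ⁻¹' (s₂ ∪ s₃) := rfl
    rw [this]
    exact ContinuousOn.preimage_isClosed_of_isClosed
      (hγ₁.continuousOn.mono (Set.Icc_subset_Icc le_rfl htp.2)) isClosed_Icc hFclosed
  have hSane : Sa.Nonempty := ⟨0, ⟨le_refl _, htp.1⟩, by rw [hγ₁.1]; exact Or.inr h₃.right_mem⟩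
  have hSabdd : BddAbove Sa := ⟨tp, fun t ht => ht.1.2⟩
  have haS : sSup Sa ∈ Sa := hSaclosed.csSup_mem hSane hSabdd
  set a := sSup Sa with hadef
  have hamax : ∀ t, t ∈ Set.Icc 0 tp → γ₁ t ∈ s₂ ∪ s₃ → t ≤ a :=
    fun t h1 h2 => le_csSup hSabdd ⟨h1, h2⟩
  -- first entry point after p
  set Sb := {t : ℝ | t ∈ Set.Icc tp L ∧ γ₁ t ∈ s₂ ∪ s₃} with hSbdef
  have hSbclosed : IsClosed Sb := by
    have : Sb = Set.Icc tp L ∩ γ₁ ⁻¹' (s₂ ∪ s₃) := rfl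
    rw [this]
    exact ContinuousOn.preimage_isClosed_of_isClosed
      (hγ₁.continuousOn.mono (Set.Icc_subset_Icc htp.1 le_rfl)) isClosed_Icc hFclosed
  have hSbne : Sb.Nonempty := ⟨L, ⟨htp.2, le_refl _⟩, by rw [hγ₁.2.1]; exact Or.inl h₂.left_mem⟩
  have hSbbdd : BddBelow Sb := ⟨tp, fun t ht => ht.1.1⟩
  have hbS : sInf Sb ∈ Sb := hSbclosed.csInf_mem hSbne hSbbdd
  set b := sInf Sb with hbdef
  have hbmin : ∀ t, t ∈ Set.Icc tp L → γ₁ t ∈ s₂ ∪ s₃ → b ≤ t :=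
    fun t h1 h2 => csInf_le hSbbdd ⟨h1, h2⟩
  have hatp : a ≠ tp := fun hh => hpF (by rw [← htpEq, ← hh]; exact haS.2)
  have hbtp : b ≠ tp := fun hh => hpF (by rw [← htpEq, ← hh]; exact hbS.2)
  have halt : a < tp := lt_of_le_of_ne haS.1.2 hatp
  have hblt : tp < b := lt_of_le_of_ne hbS.1.1 (Ne.symm hbtp)
  have hamem : a ∈ Set.Icc 0 L := ⟨haS.1.1, le_trans haS.1.2 htp.2⟩
  have hbmem : b ∈ Set.Icc 0 L := ⟨le_trans htp.1 hbS.1.1, hbS.1.2⟩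
  have hab : a ≤ b := by linarith
  have hα : IsGeodesicArc (γ₁ a) (γ₁ b) (γ₁ '' Set.Icc a b) := hγ₁.subarc hamem hbmem hab
  have hpα : p ∈ γ₁ '' Set.Icc a b := ⟨tp, ⟨halt.le, hblt.le⟩, htpEq⟩
  have hABne : γ₁ a ≠ γ₁ b := by
    intro hh
    have := hγ₁.injOn hamem hbmem hh
    linarith
  have hint : ∀ q ∈ γ₁ '' Set.Icc a b, q ∈ s₂ ∪ s₃ → q = γ₁ a ∨ q = γ₁ b := by
    rintro q ⟨t, ht, rfl⟩ hqF
    rcases eq_or_lt_of_le ht.1 with h1 | h1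
    · left; rw [← h1]
    rcases eq_or_lt_of_le ht.2 with h2 | h2
    · right; rw [h2]
    exfalso
    rcases le_or_gt t tp with hle | hlt
    · have := hamax t ⟨le_trans hamem.1 h1.le, hle⟩ hqF
      linarith
    · have := hbmin t ⟨hlt.le, le_trans h2.le hbmem.2⟩ hqF
      linarith
  have hAF : γ₁ a ∈ s₂ ∪ s₃ := haS.2
  have hBF : γ₁ b ∈ s₂ ∪ s₃ := hbS.2
  by_cases hA2 : γ₁ a ∈ s₂
  · by_cases hB2 : γ₁ b ∈ s₂
    · exact bigon h₂ hα hABne hA2 hB2 (fun q hq1 hq2 => hint q hq1 (Or.inl hq2)) hpα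
        Set.subset_union_left
    · have hB3 : γ₁ b ∈ s₃ := hBF.resolve_left hB2
      by_cases hA3 : γ₁ a ∈ s₃
      · exact bigon h₃ hα hABne hA3 hB3 (fun q hq1 hq2 => hint q hq1 (Or.inr hq2)) hpα
          Set.subset_union_right
      · -- A in s₂ only, B in s₃ only: S := s₃, T := s₂
        refine trigon hα hpα hABne h₃ h₂ hA2 hA3 hB3 hB2 ?_
          ⟨z, h₃.left_mem, h₂.right_mem⟩ Set.subset_union_right Set.subset_union_left
        intro q hq1 hq2
        rcases hq2 with hh | hh
        · exact hint q hq1 (Or.inr hh)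
        · exact hint q hq1 (Or.inl hh)
  · have hA3 : γ₁ a ∈ s₃ := hAF.resolve_left hA2
    by_cases hB3 : γ₁ b ∈ s₃
    · exact bigon h₃ hα hABne hA3 hB3 (fun q hq1 hq2 => hint q hq1 (Or.inr hq2)) hpα
        Set.subset_union_right
    · have hB2 : γ₁ b ∈ s₂ := hBF.resolve_right hB3
      -- A in s₃ only, B in s₂ only: S := s₂, T := s₃
      exact trigon hα hpα hABne h₂ h₃ hA3 hA2 hB2 hB3 hint
        ⟨z, h₂.right_mem, h₃.left_mem⟩ Set.subset_union_left Set.subset_union_right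

theorem hypConst_eq (X : Type) [MetricSpace X] : hypConst X = cycSup X := by
  apply le_antisymm
  · refine iSup_le fun x => iSup_le fun y => iSup_le fun z => iSup_le fun s₁ =>
      iSup_le fun s₂ => iSup_le fun s₃ => iSup_le fun ht => ?_
    show max (sideThin s₁ (s₂ ∪ s₃)) (max (sideThin s₂ (s₃ ∪ s₁)) (sideThin s₃ (s₁ ∪ s₂))) ≤ _
    exact max_le (side_le ht)
      (max_le (side_le ⟨ht.2.1, ht.2.2, ht.1⟩) (side_le ⟨ht.2.2, ht.1, ht.2.1⟩))
  · refine iSup_le fun x => iSup_le fun y => iSup_le fun z => iSup_le fun s₁ =>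
      iSup_le fun s₂ => iSup_le fun s₃ => iSup_le fun ht => ?_
    apply le_iSup_of_le x; apply le_iSup_of_le y; apply le_iSup_of_le z
    apply le_iSup_of_le s₁; apply le_iSup_of_le s₂; apply le_iSup_of_le s₃
    exact le_iSup_of_le ht.1 (le_refl _)

end HypAux

end

/-- In any graph `G`, the hyperbolicity constant satisfies
`δ(G) = sup { δ(T) : T is a geodesic triangle in G that is a cycle }`. -/
theorem hypConst_eq_sup_over_cycle_triangles (M : MetricGraph) :
    hypConst M.X =
      ⨆ (x : M.X) (y : M.X) (z : M.X) (s₁ : Set M.X) (s₂ : Set M.X) (s₃ : Set M.X)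
        (_ : IsGeodTriangle x y z s₁ s₂ s₃ ∧ IsSimpleClosedCurve (s₁ ∪ s₂ ∪ s₃)),
        triThin s₁ s₂ s₃ :=
  HypAux.hypConst_eq M.X
end

section
/- If X is a geodesic metric space in which every geodesic triangle that is a simple closed curve is δ-thin, then every geodesic triangle in X is δ-thin (i.e., X is δ-hyperbolic). -/
open Metric
open scoped ENNReal

namespace ThinAux

open Set

variable {X : Type} [MetricSpace X]

/-- an isometric parametrization on `[0, D]` -/
def GoodParam (φ : ℝ → X) (D : ℝ) : Prop :=
  ∀ a ∈ Icc (0 : ℝ) D, ∀ b ∈ Icc (0 : ℝ) D, dist (φ a) (φ b) = |a - b|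

theorem GoodParam.injOn {φ : ℝ → X} {D : ℝ} (h : GoodParam φ D) :
    InjOn φ (Icc 0 D) := by
  intro a ha b hb hab
  have := h a ha b hb
  rw [hab, dist_self] at this
  have := abs_eq_zero.mp this.symm
  linarith

theorem exists_param {x y : X} {s : Set X} (h : IsGeodesicArc x y s) :
    ∃ φ : ℝ → X, LipschitzWith 1 φ ∧ φ 0 = x ∧ φ (dist x y) = y ∧
      GoodParam φ (dist x y) ∧ s = φ '' Icc 0 (dist x y) := by
  obtain ⟨γ, h0, h1, hiso, hs⟩ := h
  set D := dist x y with hD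
  have hD0 : (0 : ℝ) ≤ D := dist_nonneg
  refine ⟨fun t => γ ((projIcc 0 D hD0 t : ℝ)), ?_, ?_, ?_, ?_, ?_⟩
  · refine LipschitzWith.of_dist_le_mul fun a b => ?_
    have h1 := hiso _ (projIcc 0 D hD0 a).2 _ (projIcc 0 D hD0 b).2
    rw [h1]
    have := (LipschitzWith.projIcc (a := (0:ℝ)) (b := D) hD0).dist_le_mul a b
    simpa [Subtype.dist_eq, Real.dist_eq] using this
  · simp [projIcc_of_mem hD0 (by simp [hD0] : (0:ℝ) ∈ Icc 0 D), h0]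
  · simp [projIcc_of_mem hD0 (by simp [hD0] : D ∈ Icc 0 D), h1]
  · intro a ha b hb
    show dist (γ (projIcc 0 D hD0 a : ℝ)) (γ (projIcc 0 D hD0 b : ℝ)) = |a - b|
    rw [projIcc_of_mem hD0 ha, projIcc_of_mem hD0 hb]
    exact hiso a ha b hb
  · rw [hs]
    apply Set.image_congr
    intro t ht
    rw [projIcc_of_mem hD0 ht]

theorem arc_sub {φ : ℝ → X} {D : ℝ} (hiso : GoodParam φ D) {a b : ℝ}
    (ha : a ∈ Icc 0 D) (hb : b ∈ Icc 0 D) (hab : a ≤ b) :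
    IsGeodesicArc (φ a) (φ b) (φ '' Icc a b) := by
  have hmem : ∀ t ∈ Icc (0:ℝ) (b - a), a + t ∈ Icc 0 D := by
    intro t ht
    constructor
    · have := ha.1; have := ht.1; linarith
    · have := hb.2; have := ht.2; linarith
  have hd : dist (φ a) (φ b) = b - a := by
    rw [hiso a ha b hb, abs_of_nonpos (by linarith), neg_sub]
  refine ⟨fun t => φ (a + t), by simp, ?_, ?_, ?_⟩
  · rw [hd]; ring_nf
  · intro u hu v hv
    rw [hd] at hu hv
    rw [hiso _ (hmem u hu) _ (hmem v hv)]
    congr 1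
    ring
  · rw [hd]
    have : (fun t => φ (a + t)) '' Icc 0 (b - a) = φ '' ((fun t => a + t) '' Icc 0 (b-a)) := by
      rw [← Set.image_comp]; rfl
    rw [this, Set.image_const_add_Icc]
    norm_num

theorem arc_symm {x y : X} {s : Set X} (h : IsGeodesicArc x y s) :
    IsGeodesicArc y x s := by
  obtain ⟨γ, h0, h1, hiso, hs⟩ := h
  have hD : dist y x = dist x y := dist_comm y x
  refine ⟨fun t => γ (dist x y - t), by simp [h1], by simp [hD, h0], ?_, ?_⟩
  · intro a ha b hb
    rw [hD] at ha hb
    rw [hiso _ ⟨by linarith [ha.2], by linarith [ha.1]⟩ _ ⟨by linarith [hb.2], by linarith [hb.1]⟩]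
    rw [show dist x y - a - (dist x y - b) = -(a - b) by ring, abs_neg]
  · rw [hs, hD]
    have : (fun t => γ (dist x y - t)) '' Icc 0 (dist x y)
        = γ '' ((fun t => dist x y - t) '' Icc 0 (dist x y)) := by
      rw [← Set.image_comp]; rfl
    rw [this, Set.image_const_sub_Icc]
    norm_num

theorem trivialArc (x : X) : IsGeodesicArc x x {x} := by
  refine ⟨fun _ => x, rfl, rfl, ?_, ?_⟩
  · intro a ha b hb
    simp at ha hb
    simp [ha, hb]
  · simp

theorem arc_mem_left {x y : X} {s : Set X} (h : IsGeodesicArc x y s) : x ∈ s := by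
  obtain ⟨γ, h0, _, _, hs⟩ := h
  rw [hs]
  exact ⟨0, by simp [dist_nonneg], h0⟩

theorem arc_mem_right {x y : X} {s : Set X} (h : IsGeodesicArc x y s) : y ∈ s :=
  arc_mem_left (arc_symm h)

theorem arc_isCompact {x y : X} {s : Set X} (h : IsGeodesicArc x y s) :
    IsCompact s := by
  obtain ⟨φ, hL, _, _, _, hs⟩ := exists_param h
  rw [hs]
  exact (isCompact_Icc).image hL.continuous

theorem arc_isClosed {x y : X} {s : Set X} (h : IsGeodesicArc x y s) :
    IsClosed s := (arc_isCompact h).isClosed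

theorem arc_nonempty {x y : X} {s : Set X} (h : IsGeodesicArc x y s) :
    s.Nonempty := ⟨x, arc_mem_left h⟩


theorem scc_of_param {g : ℝ → X} {s : Set X} (hc : Continuous g) (hper : g 0 = g 1)
    (hinj : InjOn g (Ico 0 1)) (hrange : g '' Ico 0 1 = s) : IsSimpleClosedCurve s := by
  have key : ∀ z : AddCircle (1:ℝ), ∃ r : ℝ, r ∈ Ico (0:ℝ) 1 ∧
      z = (r : AddCircle (1:ℝ)) ∧ AddCircle.liftIco 1 0 g z = g r := by
    intro z
    set r := AddCircle.equivIco 1 0 z with hrdef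
    have hr : (r : ℝ) ∈ Ico (0:ℝ) (0 + 1) := r.2
    norm_num at hr
    have hz : ((r : ℝ) : AddCircle (1:ℝ)) = z := (AddCircle.equivIco 1 0).symm_apply_apply z
    refine ⟨r, hr, hz.symm, ?_⟩
    rw [← hz]
    exact AddCircle.liftIco_zero_coe_apply hr
  refine ⟨AddCircle.liftIco 1 0 g, ?_, ?_, ?_⟩
  · exact AddCircle.liftIco_zero_continuous hper hc.continuousOn
  · intro z₁ z₂ h
    obtain ⟨r₁, hr₁, hz₁, hf₁⟩ := key z₁
    obtain ⟨r₂, hr₂, hz₂, hf₂⟩ := key z₂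
    rw [hf₁, hf₂] at h
    rw [hz₁, hz₂, hinj hr₁ hr₂ h]
  · rw [← hrange]
    ext q
    constructor
    · rintro ⟨z, rfl⟩
      obtain ⟨r, hr, _, hf⟩ := key z
      exact ⟨r, hr, hf.symm⟩
    · rintro ⟨t, ht, rfl⟩
      refine ⟨(t : AddCircle (1:ℝ)), ?_⟩
      exact AddCircle.liftIco_zero_coe_apply ht


theorem jordan₂ {v₁ v₂ : X} {A₁ A₂ : Set X}
    (h₁ : IsGeodesicArc v₁ v₂ A₁) (h₂ : IsGeodesicArc v₁ v₂ A₂)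
    (hne : v₁ ≠ v₂) (hi : A₁ ∩ A₂ ⊆ {v₁, v₂}) :
    IsSimpleClosedCurve (A₁ ∪ A₂) := by
  obtain ⟨φ₁, hL₁, h10, h1D, hiso₁, hs₁⟩ := exists_param h₁
  obtain ⟨φ₂, hL₂, h20, h2D, hiso₂, hs₂⟩ := exists_param h₂
  set D := dist v₁ v₂ with hDdef
  have hD : 0 < D := dist_pos.mpr hne
  set g : ℝ → X := fun t => if t ≤ 1/2 then φ₁ (2*D*t) else φ₂ (2*D*(1-t)) with hgdef
  have cross : ∀ u v : ℝ, u ∈ Icc 0 D → v ∈ Ioo 0 D → φ₁ u ≠ φ₂ v := by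
    intro u v hu hv heq
    have hm : φ₂ v ∈ A₁ ∩ A₂ :=
      ⟨heq ▸ (hs₁ ▸ ⟨u, hu, rfl⟩), hs₂ ▸ ⟨v, Ioo_subset_Icc_self hv, rfl⟩⟩
    rcases hi hm with h | h
    · have : v = 0 := hiso₂.injOn (Ioo_subset_Icc_self hv) (left_mem_Icc.mpr hD.le)
        (by rw [h, h20])
      exact absurd this (ne_of_gt hv.1)
    · have : v = D := hiso₂.injOn (Ioo_subset_Icc_self hv) (right_mem_Icc.mpr hD.le)
        (by rw [h, h2D])
      exact absurd this (ne_of_lt hv.2)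
  have mem1 : ∀ t : ℝ, 0 ≤ t → t ≤ 1/2 → 2*D*t ∈ Icc (0:ℝ) D :=
    fun t h0 h2 => ⟨by nlinarith, by nlinarith⟩
  have mem2 : ∀ t : ℝ, ¬ t ≤ 1/2 → t < 1 → 2*D*(1-t) ∈ Ioo (0:ℝ) D := by
    intro t h2 h1
    push_neg at h2
    exact ⟨by nlinarith, by nlinarith⟩
  apply scc_of_param (g := g)
  · apply Continuous.if_le
    · exact hL₁.continuous.comp (by fun_prop)
    · exact hL₂.continuous.comp (by fun_prop)
    · exact continuous_id
    · exact continuous_const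
    · intro t ht
      rw [ht, show (1:ℝ) - 1/2 = 1/2 by norm_num, show 2*D*((1:ℝ)/2) = D by ring, h1D, h2D]
  · simp only [hgdef]
    norm_num [h10, h20]
  · intro t₁ ht₁ t₂ ht₂ heq
    simp only [hgdef] at heq
    by_cases c₁ : t₁ ≤ 1/2 <;> by_cases c₂ : t₂ ≤ 1/2
    · rw [if_pos c₁, if_pos c₂] at heq
      have hD' : (2*D) ≠ 0 := by positivity
      exact mul_left_cancel₀ hD' (hiso₁.injOn (mem1 t₁ ht₁.1 c₁) (mem1 t₂ ht₂.1 c₂) heq)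
    · rw [if_pos c₁, if_neg c₂] at heq
      exact absurd heq (cross _ _ (mem1 t₁ ht₁.1 c₁) (mem2 t₂ c₂ ht₂.2))
    · rw [if_neg c₁, if_pos c₂] at heq
      exact absurd heq.symm (cross _ _ (mem1 t₂ ht₂.1 c₂) (mem2 t₁ c₁ ht₁.2))
    · rw [if_neg c₁, if_neg c₂] at heq
      have hD' : (2*D) ≠ 0 := by positivity
      have := mul_left_cancel₀ hD' (hiso₂.injOn (Ioo_subset_Icc_self (mem2 t₁ c₁ ht₁.2))
        (Ioo_subset_Icc_self (mem2 t₂ c₂ ht₂.2)) heq)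
      linarith
  · ext q
    constructor
    · rintro ⟨t, ht, rfl⟩
      simp only [hgdef]
      by_cases c : t ≤ 1/2
      · rw [if_pos c]
        exact Or.inl (hs₁ ▸ ⟨_, mem1 t ht.1 c, rfl⟩)
      · rw [if_neg c]
        exact Or.inr (hs₂ ▸ ⟨_, Ioo_subset_Icc_self (mem2 t c ht.2), rfl⟩)
    · intro hq
      rcases hq with hq | hq
      · rw [hs₁] at hq
        obtain ⟨u, hu, rfl⟩ := hq
        have h2D0 : (0:ℝ) < 2*D := by positivity
        refine ⟨u/(2*D), ⟨div_nonneg hu.1 h2D0.le,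
          by rw [div_lt_one h2D0]; nlinarith [hu.2]⟩, ?_⟩
        have hc : u/(2*D) ≤ 1/2 := by rw [div_le_iff₀ h2D0]; nlinarith [hu.2]
        simp only [hgdef]
        rw [if_pos hc]
        congr 1
        field_simp
      · rw [hs₂] at hq
        obtain ⟨v, hv, rfl⟩ := hq
        have h2D0 : (0:ℝ) < 2*D := by positivity
        rcases eq_or_lt_of_le hv.1 with h0 | h0
        · refine ⟨0, by norm_num, ?_⟩
          simp only [hgdef]
          rw [if_pos (by norm_num), show 2*D*0 = (0:ℝ) by ring, h10, ← h20, ← h0]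
        · rcases eq_or_lt_of_le hv.2 with hDv | hDv
          · refine ⟨1/2, by norm_num, ?_⟩
            simp only [hgdef]
            rw [if_pos le_rfl, show 2*D*((1:ℝ)/2) = D by ring, h1D, hDv, h2D]
          · have hrlt : v/(2*D) < 1/2 := by rw [div_lt_iff₀ h2D0]; nlinarith
            have hrpos : 0 < v/(2*D) := div_pos h0 h2D0
            refine ⟨1 - v/(2*D), ⟨by linarith, by linarith⟩, ?_⟩
            simp only [hgdef]
            rw [if_neg (by push_neg; linarith)]
            congr 1
            field_simp
            ring
  
theorem jordan₃ {v₁ v₂ v₃ : X} {A₁ A₂ A₃ : Set X}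
    (h₁ : IsGeodesicArc v₁ v₂ A₁) (h₂ : IsGeodesicArc v₂ v₃ A₂)
    (h₃ : IsGeodesicArc v₃ v₁ A₃)
    (ne₁ : v₁ ≠ v₂) (ne₂ : v₂ ≠ v₃) (ne₃ : v₃ ≠ v₁)
    (i₁₂ : A₁ ∩ A₂ ⊆ {v₂}) (i₂₃ : A₂ ∩ A₃ ⊆ {v₃}) (i₁₃ : A₁ ∩ A₃ ⊆ {v₁}) :
    IsSimpleClosedCurve (A₁ ∪ A₂ ∪ A₃) := by
  obtain ⟨φ₁, hL₁, h10, h1D, hiso₁, hs₁⟩ := exists_param h₁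
  obtain ⟨φ₂, hL₂, h20, h2D, hiso₂, hs₂⟩ := exists_param h₂
  obtain ⟨φ₃, hL₃, h30, h3D, hiso₃, hs₃⟩ := exists_param h₃
  set D₁ := dist v₁ v₂ with hD₁def
  set D₂ := dist v₂ v₃ with hD₂def
  set D₃ := dist v₃ v₁ with hD₃def
  have hd₁ : 0 < D₁ := dist_pos.mpr ne₁
  have hd₂ : 0 < D₂ := dist_pos.mpr ne₂
  have hd₃ : 0 < D₃ := dist_pos.mpr ne₃
  set g : ℝ → X := fun t => if t ≤ 1/3 then φ₁ (3*D₁*t)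
    else if t ≤ 2/3 then φ₂ (3*D₂*(t-1/3)) else φ₃ (3*D₃*(t-2/3)) with hgdef
  have mem1 : ∀ t : ℝ, 0 ≤ t → t ≤ 1/3 → 3*D₁*t ∈ Icc (0:ℝ) D₁ :=
    fun t h0 h2 => ⟨by nlinarith, by nlinarith⟩
  have mem2 : ∀ t : ℝ, ¬ t ≤ 1/3 → t ≤ 2/3 → 3*D₂*(t-1/3) ∈ Ioc (0:ℝ) D₂ := by
    intro t hL hR; push_neg at hL; exact ⟨by nlinarith, by nlinarith⟩
  have mem3 : ∀ t : ℝ, ¬ t ≤ 2/3 → t < 1 → 3*D₃*(t-2/3) ∈ Ioo (0:ℝ) D₃ := by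
    intro t hL hR; push_neg at hL; exact ⟨by nlinarith, by nlinarith⟩
  have cross12 : ∀ u v : ℝ, u ∈ Icc 0 D₁ → v ∈ Ioc 0 D₂ → φ₁ u ≠ φ₂ v := by
    intro u v hu hv heq
    have hm : φ₂ v ∈ A₁ ∩ A₂ :=
      ⟨heq ▸ (hs₁ ▸ ⟨u, hu, rfl⟩), hs₂ ▸ ⟨v, Ioc_subset_Icc_self hv, rfl⟩⟩
    have h := i₁₂ hm
    simp only [mem_singleton_iff] at h
    have : v = 0 := hiso₂.injOn (Ioc_subset_Icc_self hv) (left_mem_Icc.mpr hd₂.le)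
      (by rw [h, h20])
    exact absurd this (ne_of_gt hv.1)
  have cross23 : ∀ u v : ℝ, u ∈ Icc 0 D₂ → v ∈ Ioo 0 D₃ → φ₂ u ≠ φ₃ v := by
    intro u v hu hv heq
    have hm : φ₃ v ∈ A₂ ∩ A₃ :=
      ⟨heq ▸ (hs₂ ▸ ⟨u, hu, rfl⟩), hs₃ ▸ ⟨v, Ioo_subset_Icc_self hv, rfl⟩⟩
    have h := i₂₃ hm
    simp only [mem_singleton_iff] at h
    have : v = 0 := hiso₃.injOn (Ioo_subset_Icc_self hv) (left_mem_Icc.mpr hd₃.le)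
      (by rw [h, h30])
    exact absurd this (ne_of_gt hv.1)
  have cross13 : ∀ u v : ℝ, u ∈ Icc 0 D₁ → v ∈ Ioo 0 D₃ → φ₁ u ≠ φ₃ v := by
    intro u v hu hv heq
    have hm : φ₃ v ∈ A₁ ∩ A₃ :=
      ⟨heq ▸ (hs₁ ▸ ⟨u, hu, rfl⟩), hs₃ ▸ ⟨v, Ioo_subset_Icc_self hv, rfl⟩⟩
    have h := i₁₃ hm
    simp only [mem_singleton_iff] at h
    have : v = D₃ := hiso₃.injOn (Ioo_subset_Icc_self hv) (right_mem_Icc.mpr hd₃.le)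
      (by rw [h, h3D])
    exact absurd this (ne_of_lt hv.2)
  apply scc_of_param (g := g)
  · apply Continuous.if_le
    · exact hL₁.continuous.comp (by fun_prop)
    · apply Continuous.if_le
      · exact hL₂.continuous.comp (by fun_prop)
      · exact hL₃.continuous.comp (by fun_prop)
      · exact continuous_id
      · exact continuous_const
      · intro t ht
        rw [ht, show 3*D₂*((2:ℝ)/3-1/3) = D₂ by ring, h2D,
          show 3*D₃*((2:ℝ)/3-2/3) = 0 by ring, h30]
    · exact continuous_id
    · exact continuous_const
    · intro t ht
      rw [ht, if_pos (by norm_num : (1:ℝ)/3 ≤ 2/3),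
        show 3*D₁*((1:ℝ)/3) = D₁ by ring, h1D, show 3*D₂*((1:ℝ)/3-1/3) = 0 by ring, h20]
  · simp only [hgdef]
    rw [if_pos (by norm_num : (0:ℝ) ≤ 1/3), if_neg (by norm_num : ¬ (1:ℝ) ≤ 1/3),
      if_neg (by norm_num : ¬ (1:ℝ) ≤ 2/3), show 3*D₁*(0:ℝ) = 0 by ring, h10,
      show 3*D₃*((1:ℝ)-2/3) = D₃ by ring, h3D]
  · intro t₁ ht₁ t₂ ht₂ heq
    simp only [hgdef] at heq
    by_cases c₁ : t₁ ≤ 1/3 <;> by_cases c₂ : t₂ ≤ 1/3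
    · rw [if_pos c₁, if_pos c₂] at heq
      have hD' : (3*D₁) ≠ 0 := by positivity
      exact mul_left_cancel₀ hD' (hiso₁.injOn (mem1 t₁ ht₁.1 c₁) (mem1 t₂ ht₂.1 c₂) heq)
    · rw [if_pos c₁, if_neg c₂] at heq
      by_cases c₂' : t₂ ≤ 2/3
      · rw [if_pos c₂'] at heq
        exact absurd heq (cross12 _ _ (mem1 t₁ ht₁.1 c₁) (mem2 t₂ c₂ c₂'))
      · rw [if_neg c₂'] at heq
        exact absurd heq (cross13 _ _ (mem1 t₁ ht₁.1 c₁) (mem3 t₂ c₂' ht₂.2))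
    · rw [if_neg c₁, if_pos c₂] at heq
      by_cases c₁' : t₁ ≤ 2/3
      · rw [if_pos c₁'] at heq
        exact absurd heq.symm (cross12 _ _ (mem1 t₂ ht₂.1 c₂) (mem2 t₁ c₁ c₁'))
      · rw [if_neg c₁'] at heq
        exact absurd heq.symm (cross13 _ _ (mem1 t₂ ht₂.1 c₂) (mem3 t₁ c₁' ht₁.2))
    · rw [if_neg c₁, if_neg c₂] at heq
      by_cases c₁' : t₁ ≤ 2/3 <;> by_cases c₂' : t₂ ≤ 2/3
      · rw [if_pos c₁', if_pos c₂'] at heq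
        have hD' : (3*D₂) ≠ 0 := by positivity
        have := mul_left_cancel₀ hD' (hiso₂.injOn (Ioc_subset_Icc_self (mem2 t₁ c₁ c₁'))
          (Ioc_subset_Icc_self (mem2 t₂ c₂ c₂')) heq)
        linarith
      · rw [if_pos c₁', if_neg c₂'] at heq
        exact absurd heq (cross23 _ _ (Ioc_subset_Icc_self (mem2 t₁ c₁ c₁'))
          (mem3 t₂ c₂' ht₂.2))
      · rw [if_neg c₁', if_pos c₂'] at heq
        exact absurd heq.symm (cross23 _ _ (Ioc_subset_Icc_self (mem2 t₂ c₂ c₂'))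
          (mem3 t₁ c₁' ht₁.2))
      · rw [if_neg c₁', if_neg c₂'] at heq
        have hD' : (3*D₃) ≠ 0 := by positivity
        have := mul_left_cancel₀ hD' (hiso₃.injOn (Ioo_subset_Icc_self (mem3 t₁ c₁' ht₁.2))
          (Ioo_subset_Icc_self (mem3 t₂ c₂' ht₂.2)) heq)
        linarith
  · ext q
    constructor
    · rintro ⟨t, ht, rfl⟩
      simp only [hgdef]
      by_cases c : t ≤ 1/3
      · rw [if_pos c]
        exact Or.inl (Or.inl (hs₁ ▸ ⟨_, mem1 t ht.1 c, rfl⟩))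
      · rw [if_neg c]
        by_cases c' : t ≤ 2/3
        · rw [if_pos c']
          exact Or.inl (Or.inr (hs₂ ▸ ⟨_, Ioc_subset_Icc_self (mem2 t c c'), rfl⟩))
        · rw [if_neg c']
          exact Or.inr (hs₃ ▸ ⟨_, Ioo_subset_Icc_self (mem3 t c' ht.2), rfl⟩)
    · intro hq
      rcases hq with (hq | hq) | hq
      · rw [hs₁] at hq
        obtain ⟨u, hu, rfl⟩ := hq
        have h3D0 : (0:ℝ) < 3*D₁ := by positivity
        have hc : u/(3*D₁) ≤ 1/3 := by rw [div_le_iff₀ h3D0]; nlinarith [hu.2]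
        refine ⟨u/(3*D₁), ⟨div_nonneg hu.1 h3D0.le, by linarith⟩, ?_⟩
        simp only [hgdef]
        rw [if_pos hc]
        congr 1
        field_simp
      · rw [hs₂] at hq
        obtain ⟨v, hv, rfl⟩ := hq
        have h3D0 : (0:ℝ) < 3*D₂ := by positivity
        rcases eq_or_lt_of_le hv.1 with h0 | h0
        · refine ⟨1/3, by norm_num, ?_⟩
          simp only [hgdef]
          rw [if_pos le_rfl, show 3*D₁*((1:ℝ)/3) = D₁ by ring, h1D, ← h20, ← h0]
        · have hrpos : 0 < v/(3*D₂) := div_pos h0 h3D0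
          have hrle : v/(3*D₂) ≤ 1/3 := by rw [div_le_iff₀ h3D0]; nlinarith [hv.2]
          refine ⟨1/3 + v/(3*D₂), ⟨by linarith, by linarith⟩, ?_⟩
          simp only [hgdef]
          rw [if_neg (by push_neg; linarith), if_pos (by linarith)]
          congr 1
          field_simp
          ring
      · rw [hs₃] at hq
        obtain ⟨w, hw, rfl⟩ := hq
        have h3D0 : (0:ℝ) < 3*D₃ := by positivity
        rcases eq_or_lt_of_le hw.1 with h0 | h0
        · refine ⟨2/3, by norm_num, ?_⟩
          simp only [hgdef]
          rw [if_neg (by norm_num), if_pos le_rfl,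
            show 3*D₂*((2:ℝ)/3-1/3) = D₂ by ring, h2D, ← h30, ← h0]
        · rcases eq_or_lt_of_le hw.2 with hDw | hDw
          · refine ⟨0, by norm_num, ?_⟩
            simp only [hgdef]
            rw [if_pos (by norm_num), show 3*D₁*(0:ℝ) = 0 by ring, h10, hDw, h3D]
          · have hrpos : 0 < w/(3*D₃) := div_pos h0 h3D0
            have hrlt : w/(3*D₃) < 1/3 := by rw [div_lt_iff₀ h3D0]; nlinarith
            refine ⟨2/3 + w/(3*D₃), ⟨by linarith, by linarith⟩, ?_⟩
            simp only [hgdef]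
            rw [if_neg (by push_neg; linarith), if_neg (by push_neg; linarith)]
            congr 1
            field_simp
            ring


variable {X : Type} [MetricSpace X] {δ : ℝ≥0∞}

/-- the hypothesis of the main theorem -/
def Hyp (X : Type) [MetricSpace X] (δ : ℝ≥0∞) : Prop :=
  ∀ (x y z : X) (s₁ s₂ s₃ : Set X), IsGeodTriangle x y z s₁ s₂ s₃ →
    IsSimpleClosedCurve (s₁ ∪ s₂ ∪ s₃) → triThin s₁ s₂ s₃ ≤ δ

theorem sideThin_le {s t : Set X} {p : X} (hp : p ∈ s) :
    ENNReal.ofReal (infDist p t) ≤ sideThin s t :=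
  le_iSup₂ (f := fun q (_ : q ∈ s) => ENNReal.ofReal (infDist q t)) p hp

theorem bigon_bound (hyp : Hyp X δ) {q₁ q₂ p : X} {A B : Set X}
    (hA : IsGeodesicArc q₁ q₂ A) (hB : IsGeodesicArc q₁ q₂ B)
    (hne : q₁ ≠ q₂) (hi : A ∩ B ⊆ {q₁, q₂}) (hp : p ∈ A) :
    ENNReal.ofReal (infDist p B) ≤ δ := by
  have hT : IsGeodTriangle q₁ q₂ q₁ A B {q₁} := ⟨hA, arc_symm hB, trivialArc q₁⟩
  have hu : A ∪ B ∪ {q₁} = A ∪ B :=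
    union_eq_self_of_subset_right
      (singleton_subset_iff.mpr (Or.inl (arc_mem_left hA)))
  have hscc : IsSimpleClosedCurve (A ∪ B ∪ {q₁}) := by
    rw [hu]; exact jordan₂ hA hB hne hi
  have h := hyp _ _ _ _ _ _ hT hscc
  simp only [triThin] at h
  have h1 : sideThin A (B ∪ {q₁}) ≤ δ := le_trans (le_max_left _ _) h
  have h2 : B ∪ {q₁} = B :=
    union_eq_self_of_subset_right (singleton_subset_iff.mpr (arc_mem_left hB))
  rw [h2] at h1
  exact le_trans (sideThin_le hp) h1

theorem tri_bound (hyp : Hyp X δ) {q₁ q₂ w p : X} {A C B : Set X}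
    (hA : IsGeodesicArc q₁ q₂ A) (hC : IsGeodesicArc q₂ w C) (hB : IsGeodesicArc q₁ w B)
    (ne₁ : q₁ ≠ q₂) (ne₂ : q₂ ≠ w) (ne₃ : w ≠ q₁)
    (iAC : A ∩ C ⊆ {q₂}) (iCB : C ∩ B ⊆ {w}) (iAB : A ∩ B ⊆ {q₁}) (hp : p ∈ A) :
    ENNReal.ofReal (infDist p (C ∪ B)) ≤ δ := by
  have hT : IsGeodTriangle q₁ q₂ w A C B := ⟨hA, hC, arc_symm hB⟩
  have hscc : IsSimpleClosedCurve (A ∪ C ∪ B) :=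
    jordan₃ hA hC (arc_symm hB) ne₁ ne₂ ne₃ iAC iCB iAB
  have h := hyp _ _ _ _ _ _ hT hscc
  simp only [triThin] at h
  exact le_trans (sideThin_le hp) (le_trans (le_max_left _ _) h)

theorem same_side (hyp : Hyp X δ) {u v q₁ q₂ p : X} {s A : Set X}
    (hside : IsGeodesicArc u v s) (hq₁ : q₁ ∈ s) (hq₂ : q₂ ∈ s)
    (hA : IsGeodesicArc q₁ q₂ A) (hne : q₁ ≠ q₂) (hp : p ∈ A) (hi : A ∩ s ⊆ {q₁, q₂}) :
    ENNReal.ofReal (infDist p s) ≤ δ := by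
  obtain ⟨η, hL, h0, hD, hiso, hs⟩ := exists_param hside
  rw [hs] at hq₁ hq₂
  obtain ⟨c, hc, hcq⟩ := hq₁
  obtain ⟨c', hc', hcq'⟩ := hq₂
  have key : ∃ B : Set X, IsGeodesicArc q₁ q₂ B ∧ B ⊆ s := by
    rcases le_total c c' with h | h
    · refine ⟨η '' Icc c c', ?_, ?_⟩
      · have := arc_sub hiso hc hc' h
        rwa [hcq, hcq'] at this
      · rw [hs]; exact image_mono (f := η) (Icc_subset_Icc hc.1 hc'.2)
    · refine ⟨η '' Icc c' c, ?_, ?_⟩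
      · have := arc_sub hiso hc' hc h
        rw [hcq, hcq'] at this
        exact arc_symm this
      · rw [hs]; exact image_mono (f := η) (Icc_subset_Icc hc'.1 hc.2)
  obtain ⟨B, hBarc, hBs⟩ := key
  have hAB : A ∩ B ⊆ {q₁, q₂} := fun r hr => hi ⟨hr.1, hBs hr.2⟩
  have hbb := bigon_bound hyp hA hBarc hne hAB hp
  exact le_trans (ENNReal.ofReal_le_ofReal
    (infDist_le_infDist_of_subset hBs (arc_nonempty hBarc))) hbb

theorem core (hyp : Hyp X δ) {y z x : X} {s₂ s₃ : Set X}
    (h₂ : IsGeodesicArc y z s₂) (h₃ : IsGeodesicArc z x s₃)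
    {q₁ q₂ p : X} {A : Set X} (hA : IsGeodesicArc q₁ q₂ A) (hne : q₁ ≠ q₂) (hp : p ∈ A)
    (hint : A ∩ (s₂ ∪ s₃) ⊆ {q₁, q₂}) (hq₁ : q₁ ∈ s₂) (hq₂ : q₂ ∈ s₃)
    (hq₁3 : q₁ ∉ s₃) (hq₂2 : q₂ ∉ s₂) :
    ENNReal.ofReal (infDist p (s₂ ∪ s₃)) ≤ δ := by
  obtain ⟨η, hL₂, hη0, hηD, hiso₂, hs₂'⟩ := exists_param h₂
  set D₂ := dist y z with hD₂def
  obtain ⟨c, hc, hcq⟩ : ∃ c ∈ Icc (0:ℝ) D₂, η c = q₁ := by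
    rw [hs₂'] at hq₁; obtain ⟨c, hcm, hei⟩ := hq₁; exact ⟨c, hcm, hei⟩
  set K := Icc c D₂ ∩ η ⁻¹' s₃ with hKdef
  have hKcl : IsClosed K := isClosed_Icc.inter ((arc_isClosed h₃).preimage hL₂.continuous)
  have hKne : K.Nonempty :=
    ⟨D₂, ⟨⟨hc.2, le_refl _⟩, by simp only [Set.mem_preimage, hηD]; exact arc_mem_left h₃⟩⟩
  have hKbd : BddBelow K := ⟨c, fun t ht => ht.1.1⟩
  set d := sInf K with hddef
  have hd : d ∈ K := hKcl.csInf_mem hKne hKbd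
  have hcled : c ≤ d := le_csInf hKne (fun t ht => ht.1.1)
  have hcd : c < d := lt_of_le_of_ne hcled
    (fun h => hq₁3 (by rw [← hcq, h]; exact hd.2))
  have hmin : ∀ t, c ≤ t → t < d → η t ∉ s₃ := fun t h1 h2 ht =>
    absurd (csInf_le hKbd ⟨⟨h1, le_trans h2.le hd.1.2⟩, ht⟩) (not_le.mpr h2)
  set w := η d with hwdef
  have hdmem : d ∈ Icc (0:ℝ) D₂ := ⟨le_trans hc.1 hcled, hd.1.2⟩
  have hBarc : IsGeodesicArc q₁ w (η '' Icc c d) := by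
    have := arc_sub hiso₂ hc hdmem hcled
    rwa [hcq] at this
  set B := η '' Icc c d with hBdef
  have hws₃ : w ∈ s₃ := hd.2
  have hq₁w : q₁ ≠ w := fun h => hq₁3 (h ▸ hws₃)
  have hBs₂ : B ⊆ s₂ := by rw [hs₂']; exact image_mono (f := η) (Icc_subset_Icc hc.1 hdmem.2)
  have hB3 : B ∩ s₃ ⊆ {w} := by
    rintro r ⟨⟨t, ht, rfl⟩, hr3⟩
    have h1 : ¬ t < d := fun h => hmin t ht.1 h hr3
    have h2 : t = d := le_antisymm ht.2 (not_lt.mp h1)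
    simp [h2, hwdef]
  have hAB : A ∩ B ⊆ {q₁} := by
    intro r hr
    rcases hint ⟨hr.1, Or.inl (hBs₂ hr.2)⟩ with h | h
    · exact h
    · simp only [mem_singleton_iff] at h
      exact absurd (h ▸ hr.2) (fun hh => hq₂2 (hBs₂ hh))
  by_cases hwq : w = q₂
  · have hbb := bigon_bound hyp hA (hwq ▸ hBarc) hne
      (hAB.trans (by simp : ({q₁} : Set X) ⊆ {q₁, q₂})) hp
    refine le_trans (ENNReal.ofReal_le_ofReal (infDist_le_infDist_of_subset
      (hBs₂.trans subset_union_left) (arc_nonempty hBarc))) hbb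
  · obtain ⟨ζ, hL₃, hζ0, hζD, hiso₃, hs₃'⟩ := exists_param h₃
    set D₃ := dist z x with hD₃def
    obtain ⟨g, hg, hgq⟩ : ∃ g ∈ Icc (0:ℝ) D₃, ζ g = q₂ := by
      rw [hs₃'] at hq₂; obtain ⟨g, hgm, hei⟩ := hq₂; exact ⟨g, hgm, hei⟩
    obtain ⟨e, he, heq⟩ : ∃ e ∈ Icc (0:ℝ) D₃, ζ e = w := by
      rw [hs₃'] at hws₃; obtain ⟨e, hem, hei⟩ := hws₃; exact ⟨e, hem, hei⟩
    have key : ∃ C : Set X, IsGeodesicArc q₂ w C ∧ C ⊆ s₃ := by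
      rcases le_total g e with h | h
      · refine ⟨ζ '' Icc g e, ?_, ?_⟩
        · have := arc_sub hiso₃ hg he h
          rwa [hgq, heq] at this
        · rw [hs₃']; exact image_mono (f := ζ) (Icc_subset_Icc hg.1 he.2)
      · refine ⟨ζ '' Icc e g, ?_, ?_⟩
        · have := arc_sub hiso₃ he hg h
          rw [hgq, heq] at this
          exact arc_symm this
        · rw [hs₃']; exact image_mono (f := ζ) (Icc_subset_Icc he.1 hg.2)
    obtain ⟨C, hCarc, hCs⟩ := key
    have iAC : A ∩ C ⊆ {q₂} := by
      intro r hr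
      rcases hint ⟨hr.1, Or.inr (hCs hr.2)⟩ with h | h
      · exact absurd (h ▸ hr.2) (fun hh => hq₁3 (hCs hh))
      · exact h
    have iCB : C ∩ B ⊆ {w} := fun r hr => hB3 ⟨hr.2, hCs hr.1⟩
    have htri := tri_bound hyp hA hCarc hBarc hne (fun h => hwq h.symm) (Ne.symm hq₁w)
      iAC iCB hAB hp
    refine le_trans (ENNReal.ofReal_le_ofReal (infDist_le_infDist_of_subset ?_ ?_)) htri
    · exact union_subset (hCs.trans subset_union_right) (hBs₂.trans subset_union_left)
    · exact ⟨q₂, Or.inl (arc_mem_left hCarc)⟩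

theorem side_bound (hyp : Hyp X δ) {x y z : X} {s₁ s₂ s₃ : Set X}
    (hT : IsGeodTriangle x y z s₁ s₂ s₃) : sideThin s₁ (s₂ ∪ s₃) ≤ δ := by
  obtain ⟨h₁, h₂, h₃⟩ := hT
  refine iSup₂_le fun p hp => ?_
  by_cases hpmem : p ∈ s₂ ∪ s₃
  · rw [infDist_zero_of_mem hpmem, ENNReal.ofReal_zero]
    exact zero_le
  · obtain ⟨γ, hL₁, hγ0, hγD, hiso₁, hs₁'⟩ := exists_param h₁
    set D₁ := dist x y with hD₁def
    obtain ⟨t₀, ht₀, ht₀q⟩ : ∃ t₀ ∈ Icc (0:ℝ) D₁, γ t₀ = p := by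
      rw [hs₁'] at hp; obtain ⟨t₀, htm, hte⟩ := hp; exact ⟨t₀, htm, hte⟩
    have hTcl : IsClosed (s₂ ∪ s₃) := (arc_isClosed h₂).union (arc_isClosed h₃)
    set S₁ := Icc (0:ℝ) t₀ ∩ γ ⁻¹' (s₂ ∪ s₃) with hS₁def
    have hS₁cl : IsClosed S₁ := isClosed_Icc.inter (hTcl.preimage hL₁.continuous)
    have hS₁ne : S₁.Nonempty := by
      refine ⟨0, ⟨le_refl _, ht₀.1⟩, ?_⟩
      show γ 0 ∈ s₂ ∪ s₃
      rw [hγ0]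
      exact Or.inr (arc_mem_right h₃)
    have hS₁bd : BddAbove S₁ := ⟨t₀, fun t ht => ht.1.2⟩
    set a := sSup S₁ with hadef
    have ha : a ∈ S₁ := hS₁cl.csSup_mem hS₁ne hS₁bd
    have halet : a ≤ t₀ := ha.1.2
    have halt : a < t₀ := lt_of_le_of_ne halet
      (fun h => hpmem (by rw [← ht₀q, ← h]; exact ha.2))
    set S₂ := Icc t₀ D₁ ∩ γ ⁻¹' (s₂ ∪ s₃) with hS₂def
    have hS₂cl : IsClosed S₂ := isClosed_Icc.inter (hTcl.preimage hL₁.continuous)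
    have hS₂ne : S₂.Nonempty := by
      refine ⟨D₁, ⟨ht₀.2, le_refl _⟩, ?_⟩
      show γ D₁ ∈ s₂ ∪ s₃
      rw [hγD]
      exact Or.inl (arc_mem_left h₂)
    have hS₂bd : BddBelow S₂ := ⟨t₀, fun t ht => ht.1.1⟩
    set b := sInf S₂ with hbdef
    have hb : b ∈ S₂ := hS₂cl.csInf_mem hS₂ne hS₂bd
    have hblet : t₀ ≤ b := hb.1.1
    have hblt : t₀ < b := lt_of_le_of_ne hblet
      (fun h => hpmem (by rw [← ht₀q, h]; exact hb.2))
    have hamem : a ∈ Icc (0:ℝ) D₁ := ⟨ha.1.1, le_trans halet ht₀.2⟩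
    have hbmem : b ∈ Icc (0:ℝ) D₁ := ⟨le_trans ht₀.1 hblet, hb.1.2⟩
    have hmid : ∀ t, a < t → t < b → γ t ∉ s₂ ∪ s₃ := by
      intro t h1 h2 ht
      rcases le_total t t₀ with h | h
      · exact absurd (le_csSup hS₁bd ⟨⟨le_trans hamem.1 h1.le, h⟩, ht⟩) (not_le.mpr h1)
      · exact absurd (csInf_le hS₂bd ⟨⟨h, le_trans h2.le hbmem.2⟩, ht⟩) (not_le.mpr h2)
    set q₁ := γ a with hq₁def
    set q₂ := γ b with hq₂def
    set A := γ '' Icc a b with hAdef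
    have hAarc : IsGeodesicArc q₁ q₂ A := arc_sub hiso₁ hamem hbmem (le_of_lt (lt_trans halt hblt))
    have hpA : p ∈ A := ⟨t₀, ⟨halet, hblet⟩, ht₀q⟩
    have hneq : q₁ ≠ q₂ := by
      intro h
      have := hiso₁ a hamem b hbmem
      rw [← hq₁def, ← hq₂def, h, dist_self] at this
      have := abs_eq_zero.mp this.symm
      have hab : a < b := lt_trans halt hblt
      linarith
    have hint : A ∩ (s₂ ∪ s₃) ⊆ {q₁, q₂} := by
      rintro r ⟨⟨t, ht, rfl⟩, hr⟩
      rcases lt_or_eq_of_le ht.1 with h1 | h1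
      · rcases lt_or_eq_of_le ht.2 with h2 | h2
        · exact absurd hr (hmid t h1 h2)
        · exact Or.inr (by simp [h2, hq₂def])
      · exact Or.inl (by simp [← h1, hq₁def])
    have hq₁mem : q₁ ∈ s₂ ∪ s₃ := ha.2
    have hq₂mem : q₂ ∈ s₂ ∪ s₃ := hb.2
    -- case analysis
    by_cases h22 : q₁ ∈ s₂ ∧ q₂ ∈ s₂
    · have hi2 : A ∩ s₂ ⊆ {q₁, q₂} := fun r hr => hint ⟨hr.1, Or.inl hr.2⟩
      have := same_side hyp h₂ h22.1 h22.2 hAarc hneq hpA hi2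
      exact le_trans (ENNReal.ofReal_le_ofReal (infDist_le_infDist_of_subset
        subset_union_left (arc_nonempty h₂))) this
    · by_cases h33 : q₁ ∈ s₃ ∧ q₂ ∈ s₃
      · have hi3 : A ∩ s₃ ⊆ {q₁, q₂} := fun r hr => hint ⟨hr.1, Or.inr hr.2⟩
        have := same_side hyp h₃ h33.1 h33.2 hAarc hneq hpA hi3
        exact le_trans (ENNReal.ofReal_le_ofReal (infDist_le_infDist_of_subset
          subset_union_right (arc_nonempty h₃))) this
      · rcases hq₁mem with hq₁2 | hq₁3
        · -- q₁ ∈ s₂; then q₂ ∉ s₂, so q₂ ∈ s₃, and q₁ ∉ s₃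
          have hq₂n2 : q₂ ∉ s₂ := fun h => h22 ⟨hq₁2, h⟩
          have hq₂3 : q₂ ∈ s₃ := hq₂mem.resolve_left hq₂n2
          have hq₁n3 : q₁ ∉ s₃ := fun h => h33 ⟨h, hq₂3⟩
          exact core hyp h₂ h₃ hAarc hneq hpA hint hq₁2 hq₂3 hq₁n3 hq₂n2
        · -- q₁ ∈ s₃; then q₂ ∉ s₃, so q₂ ∈ s₂, and q₁ ∉ s₂
          have hq₂n3 : q₂ ∉ s₃ := fun h => h33 ⟨hq₁3, h⟩
          have hq₂2 : q₂ ∈ s₂ := hq₂mem.resolve_right hq₂n3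
          have hq₁n2 : q₁ ∉ s₂ := fun h => h22 ⟨h, hq₂2⟩
          exact core hyp h₂ h₃ (arc_symm hAarc) (Ne.symm hneq) hpA
            (by rw [Set.pair_comm] at hint; exact hint) hq₂2 hq₁3 hq₂n3 hq₁n2

theorem main (hyp : Hyp X δ) :
    ∀ (x y z : X) (s₁ s₂ s₃ : Set X), IsGeodTriangle x y z s₁ s₂ s₃ →
      triThin s₁ s₂ s₃ ≤ δ := by
  intro x y z s₁ s₂ s₃ hT
  obtain ⟨h₁, h₂, h₃⟩ := hT
  simp only [triThin]
  refine max_le ?_ (max_le ?_ ?_)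
  · exact side_bound hyp ⟨h₁, h₂, h₃⟩
  · exact side_bound hyp ⟨h₂, h₃, h₁⟩
  · exact side_bound hyp ⟨h₃, h₁, h₂⟩


end ThinAux

/-- If `X` is a geodesic metric space in which every geodesic triangle
that is a simple closed curve is `δ`-thin, then every geodesic triangle in `X` is
`δ`-thin (i.e., `X` is `δ`-hyperbolic). -/
theorem thin_of_cycle_triangles_thin (X : Type) [MetricSpace X]
    (hgeo : ∀ x y : X, ∃ s : Set X, IsGeodesicArc x y s) (δ : ℝ≥0∞)
    (hyp : ∀ (x y z : X) (s₁ s₂ s₃ : Set X), IsGeodTriangle x y z s₁ s₂ s₃ →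
      IsSimpleClosedCurve (s₁ ∪ s₂ ∪ s₃) → triThin s₁ s₂ s₃ ≤ δ) :
    ∀ (x y z : X) (s₁ s₂ s₃ : Set X), IsGeodTriangle x y z s₁ s₂ s₃ →
      triThin s₁ s₂ s₃ ≤ δ := by
  exact ThinAux.main hyp
end
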